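/- For every finite simple graph without isolated vertices and every k ∈ {1,…,n}: λ_k⁻(Δ_1) = ĥ_k⁻, i.e. the k-th variational eigenvalue of the graph 1-Laplacian equals the k-th modified combinatorial Cheeger constant defined via the Krasnoselskii genus. -/

import Mathlib

open scoped BigOperators Pointwise NNReal Classical

noncomputable section

/-! ### The graph `p`-Laplacian: Rayleigh quotients, genus, variational eigenvalues -/

/-- `Σ_{{i,j}∈E} |x_i − x_j|^p` (each unordered edge counted once). -/
def TVp {n : ℕ} (G : SimpleGraph (Fin n)) [DecidableRel G.Adj] (p : ℝ) (x : Fin n → ℝ) : ℝ :=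
  (∑ i : Fin n, ∑ j : Fin n, if G.Adj i j then |x i - x j| ^ p else 0) / 2

/-- `Σ_{i∈V} deg(i)·|x_i|^p`. -/
def Np {n : ℕ} (G : SimpleGraph (Fin n)) [DecidableRel G.Adj] (p : ℝ) (x : Fin n → ℝ) : ℝ :=
  ∑ i : Fin n, (G.degree i : ℝ) * |x i| ^ p

/-- The `p`-Rayleigh quotient `F_p`. -/
def Fp {n : ℕ} (G : SimpleGraph (Fin n)) [DecidableRel G.Adj] (p : ℝ) (x : Fin n → ℝ) : ℝ :=
  TVp G p x / Np G p x

/-- A set is (centrally) symmetric if `S = -S`. -/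
def SymmSet {n : ℕ} (S : Set (Fin n → ℝ)) : Prop := ∀ x ∈ S, -x ∈ S

/-- There is a continuous odd map from `S` to the unit sphere `𝕊^{k-1} ⊂ ℝ^k`. -/
def HasOddMapToSphere {n : ℕ} (S : Set (Fin n → ℝ)) (k : ℕ) : Prop :=
  ∃ φ : (Fin n → ℝ) → EuclideanSpace ℝ (Fin k),
    ContinuousOn φ S ∧ (∀ x ∈ S, ‖φ x‖ = 1) ∧ ∀ x ∈ S, φ (-x) = -φ x

/-- There is a continuous odd map from the unit sphere `𝕊^{k-1} ⊂ ℝ^k` to `S`. -/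
def HasOddMapFromSphere {n : ℕ} (S : Set (Fin n → ℝ)) (k : ℕ) : Prop :=
  ∃ φ : EuclideanSpace ℝ (Fin k) → (Fin n → ℝ),
    ContinuousOn φ (Metric.sphere (0 : EuclideanSpace ℝ (Fin k)) 1) ∧
    (∀ x ∈ Metric.sphere (0 : EuclideanSpace ℝ (Fin k)) 1, φ x ∈ S) ∧
    ∀ x ∈ Metric.sphere (0 : EuclideanSpace ℝ (Fin k)) 1, φ (-x) = -φ x

/-- The Krasnoselskii genus `γ⁻`. -/
def genNeg {n : ℕ} (S : Set (Fin n → ℝ)) : ℕ :=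
  if S.Nonempty ∧ SymmSet S then sInf {k | 1 ≤ k ∧ HasOddMapToSphere S k} else 0

/-- The index `γ⁺`. -/
def genPos {n : ℕ} (S : Set (Fin n → ℝ)) : ℕ :=
  if S.Nonempty ∧ SymmSet S then sSup {k | 1 ≤ k ∧ HasOddMapFromSphere S k} else 0

/-- Admissible sets for the min-max principle: symmetric compact subsets of `ℝ^n∖{0}`. -/
def Admissible {n : ℕ} (S : Set (Fin n → ℝ)) : Prop :=
  IsCompact S ∧ (0 : Fin n → ℝ) ∉ S ∧ SymmSet S

/-- The variational eigenvalues `λ_k⁻(Δ_p)`. -/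
def lamNeg {n : ℕ} (G : SimpleGraph (Fin n)) [DecidableRel G.Adj] (p : ℝ) (k : ℕ) : ℝ :=
  sInf {r | ∃ S : Set (Fin n → ℝ), Admissible S ∧ k ≤ genNeg S ∧ r = sSup (Fp G p '' S)}

/-- The min-max eigenvalues `λ_k⁺(Δ_p)`. -/
def lamPos {n : ℕ} (G : SimpleGraph (Fin n)) [DecidableRel G.Adj] (p : ℝ) (k : ℕ) : ℝ :=
  sInf {r | ∃ S : Set (Fin n → ℝ), Admissible S ∧ k ≤ genPos S ∧ r = sSup (Fp G p '' S)}

/-! ### Eigenpairs of `Δ_p` -/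

/-- The set-valued sign: `Sgn(t) = {1}` if `t>0`, `[-1,1]` if `t=0`, `{-1}` if `t<0`. -/
def Sgn (t : ℝ) : Set ℝ := if 0 < t then {1} else if t < 0 then {-1} else Set.Icc (-1) 1

/-- Eigenpairs of the graph `p`-Laplacian for `p > 1`.  (Note that for `t = 0` the
expression `|t|^(p-2) * t` equals `0`, matching the convention `|t|^{p-2}t = 0`.) -/
def IsEigenpairP {n : ℕ} (G : SimpleGraph (Fin n)) [DecidableRel G.Adj] (p lam : ℝ)
    (x : Fin n → ℝ) : Prop :=
  x ≠ 0 ∧ ∀ i, (∑ j : Fin n, if G.Adj i j then |x i - x j| ^ (p - 2) * (x i - x j) else 0) =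
    lam * (G.degree i : ℝ) * (|x i| ^ (p - 2) * x i)

/-- Eigenpairs of the graph `1`-Laplacian. -/
def IsEigenpair1 {n : ℕ} (G : SimpleGraph (Fin n)) [DecidableRel G.Adj] (lam : ℝ)
    (x : Fin n → ℝ) : Prop :=
  x ≠ 0 ∧ ∃ z : Fin n → Fin n → ℝ,
    (∀ i j, G.Adj i j → z i j ∈ Sgn (x i - x j)) ∧
    (∀ i j, G.Adj i j → z i j = -z j i) ∧
    ∀ i, (∑ j : Fin n, if G.Adj i j then z i j else 0) ∈
      (fun s => lam * (G.degree i : ℝ) * s) '' Sgn (x i)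

/-- Eigenpairs of `Δ_p` for `p ≥ 1` (with the `1`-Laplacian convention at `p = 1`). -/
def IsEigenpair {n : ℕ} (G : SimpleGraph (Fin n)) [DecidableRel G.Adj] (p lam : ℝ)
    (x : Fin n → ℝ) : Prop :=
  (p = 1 ∧ IsEigenpair1 G lam x) ∨ (1 < p ∧ IsEigenpairP G p lam x)

/-! ### Cheeger constants -/

/-- `|∂A|`: the number of edges with exactly one endpoint in `A`. -/
def eBoundary {n : ℕ} (G : SimpleGraph (Fin n)) [DecidableRel G.Adj] (A : Finset (Fin n)) : ℕ :=
  ∑ i ∈ A, ∑ j ∈ Aᶜ, if G.Adj i j then 1 else 0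

/-- `vol(A) = Σ_{i∈A} deg(i)`. -/
def volG {n : ℕ} (G : SimpleGraph (Fin n)) [DecidableRel G.Adj] (A : Finset (Fin n)) : ℕ :=
  ∑ i ∈ A, G.degree i

/-- The multi-way Cheeger constants `h_k`. -/
def cheeger {n : ℕ} (G : SimpleGraph (Fin n)) [DecidableRel G.Adj] (k : ℕ) : ℝ :=
  sInf {r | ∃ A : Fin k → Finset (Fin n), (∀ i, (A i).Nonempty) ∧
    (∀ i j, i ≠ j → Disjoint (A i) (A j)) ∧
    r = ⨆ i, (eBoundary G (A i) : ℝ) / (volG G (A i) : ℝ)}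
/-! ### The map Φ -/

/-- `Φ_c(x)_i = |x_i|^c · sign(x_i)`. -/
def Phi {n : ℕ} (c : ℝ) (x : Fin n → ℝ) : Fin n → ℝ := fun i => |x i| ^ c * Real.sign (x i)

/-! ### The simplicial complex `K_n` and the modified Cheeger constants -/

/-- The vector `1_A - 1_B`. -/
def charVec {n : ℕ} (A B : Finset (Fin n)) : Fin n → ℝ :=
  fun i => if i ∈ A then 1 else if i ∈ B then -1 else 0

/-- The inclusion order on pairs of sets: `(A,B) ≺ (A',B')` iff `A ⊆ A'` and `B ⊆ B'`. -/
def pairLE {n : ℕ} (a b : Finset (Fin n) × Finset (Fin n)) : Prop := a.1 ⊆ b.1 ∧ a.2 ⊆ b.2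

/-- The geometric realization `|K(𝒜)|`: the union over all chains of elements of `𝒜` of the
convex hulls of the corresponding vectors `1_A - 1_B`. -/
def geomComplex {n : ℕ} (𝒜 : Set (Finset (Fin n) × Finset (Fin n))) : Set (Fin n → ℝ) :=
  ⋃ (C : Set (Finset (Fin n) × Finset (Fin n))) (_ : C ⊆ 𝒜) (_ : IsChain pairLE C),
    convexHull ℝ ((fun ab => charVec ab.1 ab.2) '' C)

/-- The modified combinatorial `k`-way Cheeger constant `ĥ_k⁻`. -/
def hHatNeg {n : ℕ} (G : SimpleGraph (Fin n)) [DecidableRel G.Adj] (k : ℕ) : ℝ :=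
  sInf {r | ∃ 𝒜 : Set (Finset (Fin n) × Finset (Fin n)),
    (∀ ab ∈ 𝒜, Disjoint ab.1 ab.2 ∧ (ab.1 ∪ ab.2).Nonempty) ∧
    k ≤ genNeg (geomComplex 𝒜) ∧
    r = sSup ((fun ab : Finset (Fin n) × Finset (Fin n) =>
      ((eBoundary G ab.1 : ℝ) + (eBoundary G ab.2 : ℝ)) / (volG G (ab.1 ∪ ab.2) : ℝ)) '' 𝒜)}

/-! ### Subpartitions into cliques and the pseudo-independence number -/

/-- `c(V_i) = 1` if `|V_i| ≤ 2` and `c(V_i) = 2` if `|V_i| ≥ 3`. -/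
def cOf {n : ℕ} (A : Finset (Fin n)) : ℕ := if A.card ≤ 2 then 1 else 2

/-- A subpartition of `V` into sets each inducing a complete subgraph of `G`. -/
def IsCliqueSubpartition {n : ℕ} (G : SimpleGraph (Fin n)) (P : Finset (Finset (Fin n))) : Prop :=
  (∀ A ∈ P, A.Nonempty ∧ G.IsClique (A : Set (Fin n))) ∧
    ∀ A ∈ P, ∀ B ∈ P, A ≠ B → Disjoint A B

/-- The members of `P` are pairwise non-adjacent: every edge of `G` meets at most one of them. -/
def PairwiseNonAdjacent {n : ℕ} (G : SimpleGraph (Fin n)) (P : Finset (Finset (Fin n))) : Prop :=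
  ∀ i j, G.Adj i j → ∀ A ∈ P, ∀ B ∈ P, (i ∈ A ∨ j ∈ A) → (i ∈ B ∨ j ∈ B) → A = B

/-- The pseudo-independence number `α_*(G)`. -/
def pseudoIndepNum {n : ℕ} (G : SimpleGraph (Fin n)) : ℕ :=
  sSup {m | ∃ P : Finset (Finset (Fin n)), IsCliqueSubpartition G P ∧
    PairwiseNonAdjacent G P ∧ m = ∑ A ∈ P, cOf A}

/-- `h_*(P)`. -/
def hStar {n : ℕ} (G : SimpleGraph (Fin n)) [DecidableRel G.Adj]
    (P : Finset (Finset (Fin n))) : ℝ :=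
  sInf {r | ∃ A : Finset (Fin n), A.Nonempty ∧ (∀ v ∈ A, ∃ W ∈ P, v ∈ W) ∧
    (∀ W ∈ P, (A ∩ W).card ≤ 1) ∧ r = (eBoundary G A : ℝ) / (volG G A : ℝ)}

/-! ### The set-valued 1-Laplacian and the p-Laplacian operator -/

/-- The set `Δ_1 x`. -/
def Delta1Set {n : ℕ} (G : SimpleGraph (Fin n)) [DecidableRel G.Adj] (x : Fin n → ℝ) :
    Set (Fin n → ℝ) :=
  {v | ∃ z : Fin n → Fin n → ℝ,
    (∀ i j, G.Adj i j → z i j ∈ Sgn (x i - x j)) ∧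
    (∀ i j, G.Adj i j → z i j = -z j i) ∧
    v = fun i => ∑ j : Fin n, if G.Adj i j then z i j else 0}

/-- The `p`-Laplacian `Δ_p x` for `p > 1`. -/
def DeltaP {n : ℕ} (G : SimpleGraph (Fin n)) [DecidableRel G.Adj] (p : ℝ) (x : Fin n → ℝ) :
    Fin n → ℝ :=
  fun i => ∑ j : Fin n, if G.Adj i j then |x i - x j| ^ (p - 2) * (x i - x j) else 0

/-- The normalized eigenspace `Ŝ_λ(Δ_p)`. -/
def hatS {n : ℕ} (G : SimpleGraph (Fin n)) [DecidableRel G.Adj] (p lam : ℝ) :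
    Set (Fin n → ℝ) :=
  {x | ‖x‖ = 1 ∧ IsEigenpair G p lam x}


section Aux
open MeasureTheory









variable {n : ℕ} (G : SimpleGraph (Fin n)) [DecidableRel G.Adj]

lemma eBoundary_eq (A : Finset (Fin n)) :
    (eBoundary G A : ℝ) = ∑ i : Fin n, ∑ j : Fin n,
      if G.Adj i j then (if i ∈ A then 1 else 0) * (if j ∈ A then 0 else 1) else 0 := by
  have h1 : ∀ i : Fin n, (∑ j : Fin n,
      if G.Adj i j then (if i ∈ A then (1:ℝ) else 0) * (if j ∈ A then 0 else 1) else 0)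
      = if i ∈ A then ∑ j ∈ Aᶜ, (if G.Adj i j then (1:ℝ) else 0) else 0 := by
    intro i
    by_cases hi : i ∈ A
    · simp only [hi, if_true, one_mul]
      rw [show (∑ j ∈ Aᶜ, if G.Adj i j then (1:ℝ) else 0)
          = ∑ j ∈ Finset.univ ∩ Aᶜ, (if G.Adj i j then (1:ℝ) else 0) by
            rw [Finset.univ_inter]]
      rw [← Finset.sum_ite_mem]
      refine Finset.sum_congr rfl fun j _ => ?_
      by_cases hj : j ∈ A <;> by_cases ha : G.Adj i j <;>
        simp [hj, ha, Finset.mem_compl]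
    · simp [hi]
  simp only [h1]
  rw [show (∑ i : Fin n, if i ∈ A then (∑ j ∈ Aᶜ, if G.Adj i j then (1:ℝ) else 0) else 0)
      = ∑ i ∈ Finset.univ ∩ A, (∑ j ∈ Aᶜ, if G.Adj i j then (1:ℝ) else 0) from
    Finset.sum_ite_mem _ _ _]
  rw [Finset.univ_inter, eBoundary]
  push_cast
  rfl

/-- Edge-count identity. -/
lemma TV_charVec (A B : Finset (Fin n)) (hAB : Disjoint A B) :
    (∑ i : Fin n, ∑ j : Fin n, if G.Adj i j then |charVec A B i - charVec A B j| else 0)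
      = 2 * ((eBoundary G A : ℝ) + (eBoundary G B : ℝ)) := by
  have key : ∀ i j, |charVec A B i - charVec A B j| =
      ((if i ∈ A then 1 else 0) * (if j ∈ A then 0 else 1)
        + (if j ∈ A then 1 else 0) * (if i ∈ A then 0 else 1))
      + ((if i ∈ B then 1 else 0) * (if j ∈ B then 0 else 1)
        + (if j ∈ B then 1 else 0) * (if i ∈ B then 0 else 1)) := by
    intro i j
    have hi : i ∈ A → i ∉ B := fun h => Finset.disjoint_left.1 hAB h
    have hj : j ∈ A → j ∉ B := fun h => Finset.disjoint_left.1 hAB h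
    unfold charVec
    by_cases h1 : i ∈ A <;> by_cases h2 : j ∈ A <;> by_cases h3 : i ∈ B <;>
      by_cases h4 : j ∈ B
    all_goals first
      | exact absurd h3 (hi h1)
      | exact absurd h4 (hj h2)
      | (simp only [h1, h2, h3, h4, if_true, if_false]; norm_num)
  have expand : ∀ i j : Fin n, (if G.Adj i j then |charVec A B i - charVec A B j| else 0)
      = (if G.Adj i j then (if i ∈ A then (1:ℝ) else 0) * (if j ∈ A then 0 else 1) else 0)
      + (if G.Adj i j then (if j ∈ A then (1:ℝ) else 0) * (if i ∈ A then 0 else 1) else 0)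
      + ((if G.Adj i j then (if i ∈ B then (1:ℝ) else 0) * (if j ∈ B then 0 else 1) else 0)
      + (if G.Adj i j then (if j ∈ B then (1:ℝ) else 0) * (if i ∈ B then 0 else 1) else 0)) := by
    intro i j
    by_cases h : G.Adj i j
    · simp only [h, if_true, key i j]
    · simp [h]
  have step : (∑ i : Fin n, ∑ j : Fin n, if G.Adj i j then |charVec A B i - charVec A B j| else 0)
      = (∑ i : Fin n, ∑ j : Fin n, if G.Adj i j then
          (if i ∈ A then (1:ℝ) else 0) * (if j ∈ A then 0 else 1) else 0)
      + (∑ i : Fin n, ∑ j : Fin n, if G.Adj i j then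
          (if j ∈ A then (1:ℝ) else 0) * (if i ∈ A then 0 else 1) else 0)
      + ((∑ i : Fin n, ∑ j : Fin n, if G.Adj i j then
          (if i ∈ B then (1:ℝ) else 0) * (if j ∈ B then 0 else 1) else 0)
      + (∑ i : Fin n, ∑ j : Fin n, if G.Adj i j then
          (if j ∈ B then (1:ℝ) else 0) * (if i ∈ B then 0 else 1) else 0)) := by
    simp only [expand, Finset.sum_add_distrib]
  have swap : ∀ (C : Finset (Fin n)), (∑ i : Fin n, ∑ j : Fin n, if G.Adj i j then
      (if j ∈ C then (1:ℝ) else 0) * (if i ∈ C then 0 else 1) else 0) = eBoundary G C := by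
    intro C
    rw [eBoundary_eq, Finset.sum_comm]
    refine Finset.sum_congr rfl fun i _ => Finset.sum_congr rfl fun j _ => ?_
    by_cases h : G.Adj i j
    · have h' : G.Adj j i := h.symm
      simp [h, h']
    · have h' : ¬ G.Adj j i := fun hc => h hc.symm
      simp [h, h']
  rw [step, swap A, swap B, ← eBoundary_eq, ← eBoundary_eq]
  ring

lemma N_charVec (A B : Finset (Fin n)) (hAB : Disjoint A B) :
    (∑ i : Fin n, (G.degree i : ℝ) * |charVec A B i|) = (volG G (A ∪ B) : ℝ) := by
  have key : ∀ i : Fin n, (G.degree i : ℝ) * |charVec A B i|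
      = if i ∈ A ∪ B then (G.degree i : ℝ) else 0 := by
    intro i
    have hi : i ∈ A → i ∉ B := fun h => Finset.disjoint_left.1 hAB h
    unfold charVec
    by_cases h1 : i ∈ A <;> by_cases h2 : i ∈ B <;>
      simp [h1, h2, Finset.mem_union]
  simp only [key]
  rw [show (∑ i : Fin n, if i ∈ A ∪ B then (G.degree i : ℝ) else 0)
      = ∑ i ∈ Finset.univ ∩ (A ∪ B), (G.degree i : ℝ) from Finset.sum_ite_mem _ _ _]
  rw [Finset.univ_inter, volG]
  push_cast
  rfl



def lvA {n : ℕ} (x : Fin n → ℝ) (s : ℝ) : Finset (Fin n) :=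
  Finset.univ.filter (fun i => s < x i)

def lvB {n : ℕ} (x : Fin n → ℝ) (s : ℝ) : Finset (Fin n) :=
  Finset.univ.filter (fun i => x i < -s)

variable {n : ℕ}

@[simp] lemma mem_lvA {x : Fin n → ℝ} {s : ℝ} {i : Fin n} : i ∈ lvA x s ↔ s < x i := by
  simp [lvA]

@[simp] lemma mem_lvB {x : Fin n → ℝ} {s : ℝ} {i : Fin n} : i ∈ lvB x s ↔ x i < -s := by
  simp [lvB]

lemma lvA_neg (x : Fin n → ℝ) (s : ℝ) : lvA (-x) s = lvB x s := by
  ext i; simp [lt_neg]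

lemma lvB_neg (x : Fin n → ℝ) (s : ℝ) : lvB (-x) s = lvA x s := by
  ext i; simp [neg_lt]

lemma disjoint_lv (x : Fin n → ℝ) {s : ℝ} (hs : 0 ≤ s) : Disjoint (lvA x s) (lvB x s) := by
  rw [Finset.disjoint_left]
  intro i h1 h2
  rw [mem_lvA] at h1; rw [mem_lvB] at h2
  linarith

lemma lvA_anti (x : Fin n → ℝ) {s t : ℝ} (h : s ≤ t) : lvA x t ⊆ lvA x s := by
  intro i hi; rw [mem_lvA] at *; linarith

lemma lvB_anti (x : Fin n → ℝ) {s t : ℝ} (h : s ≤ t) : lvB x t ⊆ lvB x s := by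
  intro i hi; rw [mem_lvB] at *; linarith

lemma measurableSet_lveq (x : Fin n → ℝ) (A B : Finset (Fin n)) :
    MeasurableSet {u : ℝ | lvA x u = A ∧ lvB x u = B} := by
  have : {u : ℝ | lvA x u = A ∧ lvB x u = B} =
      (⋂ i : Fin n, {u : ℝ | u < x i ↔ i ∈ A}) ∩ ⋂ i : Fin n, {u : ℝ | x i < -u ↔ i ∈ B} := by
    ext u
    simp only [Set.mem_setOf_eq, Set.mem_inter_iff, Set.mem_iInter, Finset.ext_iff, mem_lvA,
      mem_lvB]
  rw [this]
  refine MeasurableSet.inter (MeasurableSet.iInter fun i => ?_)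
    (MeasurableSet.iInter fun i => ?_)
  · by_cases hi : i ∈ A
    · have : {u : ℝ | u < x i ↔ i ∈ A} = Set.Iio (x i) := by ext u; simp [hi]
      rw [this]; exact measurableSet_Iio
    · have : {u : ℝ | u < x i ↔ i ∈ A} = Set.Ici (x i) := by
        ext u; simp [hi, not_lt, Set.mem_Ici]
      rw [this]; exact measurableSet_Ici
  · by_cases hi : i ∈ B
    · have : {u : ℝ | x i < -u ↔ i ∈ B} = Set.Iio (-x i) := by
        ext u; simp [hi, lt_neg, Set.mem_Iio]
      rw [this]; exact measurableSet_Iio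
    · have : {u : ℝ | x i < -u ↔ i ∈ B} = Set.Ici (-x i) := by
        ext u
        simp only [Set.mem_setOf_eq, hi, iff_false, not_lt, Set.mem_Ici]
        constructor <;> intro <;> linarith
      rw [this]; exact measurableSet_Ici

lemma level_decomp {E : Type*} [NormedAddCommGroup E] [NormedSpace ℝ E] (x : Fin n → ℝ)
    (h : Finset (Fin n) × Finset (Fin n) → E) :
    (fun s : ℝ => h (lvA x s, lvB x s)) = fun s => ∑ p : Finset (Fin n) × Finset (Fin n),
      Set.indicator {u : ℝ | lvA x u = p.1 ∧ lvB x u = p.2} (fun _ => h p) s := by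
  funext s
  rw [Finset.sum_eq_single (lvA x s, lvB x s)]
  · rw [Set.indicator_of_mem]
    exact ⟨rfl, rfl⟩
  · intro p _ hp
    refine Set.indicator_of_notMem (fun hmem => hp ?_) _
    exact Prod.ext hmem.1.symm hmem.2.symm
  · intro hmem
    exact absurd (Finset.mem_univ _) hmem

lemma aesm_level {E : Type*} [NormedAddCommGroup E] [NormedSpace ℝ E] (x : Fin n → ℝ)
    (h : Finset (Fin n) × Finset (Fin n) → E) (μ : Measure ℝ) :
    AEStronglyMeasurable (fun s : ℝ => h (lvA x s, lvB x s)) μ := by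
  rw [level_decomp]
  refine (Finset.stronglyMeasurable_fun_sum (M := E) _ fun p _ => ?_).aestronglyMeasurable
  exact stronglyMeasurable_const.indicator (measurableSet_lveq x p.1 p.2)

lemma integrable_level {E : Type*} [NormedAddCommGroup E] [NormedSpace ℝ E] [CompleteSpace E] (x : Fin n → ℝ)
    (h : Finset (Fin n) × Finset (Fin n) → E) :
    Integrable (fun s : ℝ => h (lvA x s, lvB x s)) (volume.restrict (Set.Ioo (0:ℝ) 1)) := by
  rw [level_decomp]
  refine integrable_finset_sum _ fun p _ => ?_
  exact (integrable_const _).indicator (measurableSet_lveq x p.1 p.2)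

lemma integral_level {E : Type*} [NormedAddCommGroup E] [NormedSpace ℝ E] [CompleteSpace E] (x : Fin n → ℝ)
    (h : Finset (Fin n) × Finset (Fin n) → E) :
    (∫ s in Set.Ioo (0:ℝ) 1, h (lvA x s, lvB x s)) =
      ∑ p : Finset (Fin n) × Finset (Fin n),
        (volume ({u : ℝ | lvA x u = p.1 ∧ lvB x u = p.2} ∩ Set.Ioo (0:ℝ) 1)).toReal • h p := by
  rw [show (fun s : ℝ => h (lvA x s, lvB x s)) = fun s => ∑ p : Finset (Fin n) × Finset (Fin n),
      Set.indicator {u : ℝ | lvA x u = p.1 ∧ lvB x u = p.2} (fun _ => h p) s from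
    level_decomp x h]
  rw [integral_finset_sum _ fun p _ =>
    (integrable_const _).indicator (measurableSet_lveq x p.1 p.2)]
  refine Finset.sum_congr rfl fun p _ => ?_
  rw [integral_indicator (measurableSet_lveq x p.1 p.2),
    Measure.restrict_restrict (measurableSet_lveq x p.1 p.2), setIntegral_const, measureReal_def]




/-- the scalar profile of `charVec (lvA x s) (lvB x s) i` -/
def hfun (t s : ℝ) : ℝ := if s < t then 1 else if t < -s then -1 else 0

lemma int_ind_lt (t : ℝ) :
    (∫ s in Set.Ioo (0:ℝ) 1, (if s < t then (1:ℝ) else 0)) = max (min t 1) 0 := by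
  have h1 : (fun s : ℝ => if s < t then (1:ℝ) else 0) =
      Set.indicator (Set.Iio t) (fun _ => (1:ℝ)) := by
    funext s
    by_cases h : s < t <;> simp [Set.indicator_apply, Set.mem_Iio, h]
  rw [h1, integral_indicator measurableSet_Iio,
    Measure.restrict_restrict measurableSet_Iio, setIntegral_const]
  have h2 : Set.Iio t ∩ Set.Ioo (0:ℝ) 1 = Set.Ioo 0 (min t 1) := by
    ext s
    simp only [Set.mem_inter_iff, Set.mem_Iio, Set.mem_Ioo, lt_min_iff]
    tauto
  rw [h2, measureReal_def, Real.volume_Ioo, smul_eq_mul, mul_one, ENNReal.toReal_ofReal', sub_zero]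

lemma int_ind_lt' {t : ℝ} (h1 : t ≤ 1) :
    (∫ s in Set.Ioo (0:ℝ) 1, (if s < t then (1:ℝ) else 0)) = max t 0 := by
  rw [int_ind_lt, min_eq_left h1]

lemma integrable_ind_lt (t : ℝ) :
    Integrable (fun s : ℝ => if s < t then (1:ℝ) else 0)
      (volume.restrict (Set.Ioo (0:ℝ) 1)) := by
  have h1 : (fun s : ℝ => if s < t then (1:ℝ) else 0) =
      Set.indicator (Set.Iio t) (fun _ => (1:ℝ)) := by
    funext s
    by_cases h : s < t <;> simp [Set.indicator_apply, Set.mem_Iio, h]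
  rw [h1]
  exact (integrable_const _).indicator measurableSet_Iio

lemma max_sub_max_neg (t : ℝ) : max t 0 - max (-t) 0 = t := by
  rcases le_total 0 t with h | h
  · rw [max_eq_left h, max_eq_right (by linarith)]; ring
  · rw [max_eq_right h, max_eq_left (by linarith)]; ring

lemma max_add_max_neg (t : ℝ) : max t 0 + max (-t) 0 = |t| := by
  rcases le_total 0 t with h | h
  · rw [max_eq_left h, max_eq_right (by linarith), abs_of_nonneg h]; ring
  · rw [max_eq_right h, max_eq_left (by linarith), abs_of_nonpos h]; ring

lemma int_absdiff_le {a b : ℝ} (ha : |a| ≤ 1) (hb : |b| ≤ 1) (hba : b ≤ a) :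
    (∫ s in Set.Ioo (0:ℝ) 1, |hfun a s - hfun b s|) = |a - b| := by
  have ha1 : a ≤ 1 := (abs_le.1 ha).2
  have ha2 : -a ≤ 1 := by have := (abs_le.1 ha).1; linarith
  have hb1 : b ≤ 1 := (abs_le.1 hb).2
  have hb2 : -b ≤ 1 := by have := (abs_le.1 hb).1; linarith
  have hpt : ∀ s ∈ Set.Ioo (0:ℝ) 1, |hfun a s - hfun b s| =
      (((if s < a then (1:ℝ) else 0) - (if s < b then 1 else 0)) +
       ((if s < -b then (1:ℝ) else 0) - (if s < -a then 1 else 0))) := by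
    intro s hs
    obtain ⟨hs0, _⟩ := hs
    unfold hfun
    split_ifs <;> first | linarith | norm_num
  rw [setIntegral_congr_fun measurableSet_Ioo hpt]
  have I1 : Integrable (fun s : ℝ => (if s < a then (1:ℝ) else 0) - (if s < b then 1 else 0))
      (volume.restrict (Set.Ioo (0:ℝ) 1)) := (integrable_ind_lt a).sub (integrable_ind_lt b)
  have I2 : Integrable (fun s : ℝ => (if s < -b then (1:ℝ) else 0) - (if s < -a then 1 else 0))
      (volume.restrict (Set.Ioo (0:ℝ) 1)) := (integrable_ind_lt (-b)).sub (integrable_ind_lt (-a))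
  rw [integral_add I1 I2]
  rw [integral_sub (integrable_ind_lt a) (integrable_ind_lt b),
    integral_sub (integrable_ind_lt (-b)) (integrable_ind_lt (-a))]
  rw [int_ind_lt' ha1, int_ind_lt' hb1, int_ind_lt' hb2, int_ind_lt' ha2]
  rw [abs_of_nonneg (by linarith : (0:ℝ) ≤ a - b)]
  have h1 := max_sub_max_neg a
  have h2 := max_sub_max_neg b
  linarith

lemma int_absdiff {a b : ℝ} (ha : |a| ≤ 1) (hb : |b| ≤ 1) :
    (∫ s in Set.Ioo (0:ℝ) 1, |hfun a s - hfun b s|) = |a - b| := by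
  rcases le_total b a with h | h
  · exact int_absdiff_le ha hb h
  · have : ∀ s : ℝ, |hfun a s - hfun b s| = |hfun b s - hfun a s| := fun s => abs_sub_comm _ _
    simp only [this]
    rw [int_absdiff_le hb ha h, abs_sub_comm]

lemma int_absval {t : ℝ} (ht : |t| ≤ 1) :
    (∫ s in Set.Ioo (0:ℝ) 1, |hfun t s|) = |t| := by
  have ht1 : t ≤ 1 := (abs_le.1 ht).2
  have ht2 : -t ≤ 1 := by have := (abs_le.1 ht).1; linarith
  have hpt : ∀ s ∈ Set.Ioo (0:ℝ) 1, |hfun t s| =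
      ((if s < t then (1:ℝ) else 0) + (if s < -t then 1 else 0)) := by
    intro s hs
    obtain ⟨hs0, _⟩ := hs
    unfold hfun
    split_ifs <;> first | linarith | norm_num
  rw [setIntegral_congr_fun measurableSet_Ioo hpt]
  rw [integral_add (integrable_ind_lt t) (integrable_ind_lt (-t))]
  rw [int_ind_lt' ht1, int_ind_lt' ht2, max_add_max_neg]


variable {n : ℕ} (G : SimpleGraph (Fin n)) [DecidableRel G.Adj]

lemma charVec_lv (x : Fin n → ℝ) (s : ℝ) (i : Fin n) :
    charVec (lvA x s) (lvB x s) i = hfun (x i) s := by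
  simp [charVec, hfun, mem_lvA, mem_lvB]

lemma coareaTV (x : Fin n → ℝ) (hx : ∀ i, |x i| ≤ 1) :
    TVp G 1 x = ∫ s in Set.Ioo (0:ℝ) 1,
      ((eBoundary G (lvA x s) : ℝ) + (eBoundary G (lvB x s) : ℝ)) := by
  have hint : ∀ i j : Fin n, Integrable (fun s : ℝ =>
      if G.Adj i j then |charVec (lvA x s) (lvB x s) i - charVec (lvA x s) (lvB x s) j| else 0)
      (volume.restrict (Set.Ioo (0:ℝ) 1)) := fun i j =>
    integrable_level x (fun p => if G.Adj i j then |charVec p.1 p.2 i - charVec p.1 p.2 j| else 0)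
  have hpt : ∀ s ∈ Set.Ioo (0:ℝ) 1,
      ((eBoundary G (lvA x s) : ℝ) + (eBoundary G (lvB x s) : ℝ))
      = (∑ i : Fin n, ∑ j : Fin n, if G.Adj i j then
          |charVec (lvA x s) (lvB x s) i - charVec (lvA x s) (lvB x s) j| else 0) / 2 := by
    intro s hs
    rw [TV_charVec G (lvA x s) (lvB x s) (disjoint_lv x (le_of_lt hs.1))]
    ring
  rw [setIntegral_congr_fun measurableSet_Ioo hpt, integral_div,
    integral_finset_sum _ (fun i _ => integrable_finset_sum _ (fun j _ => hint i j))]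
  have : ∀ i : Fin n, (∫ s in Set.Ioo (0:ℝ) 1, ∑ j : Fin n, if G.Adj i j then
      |charVec (lvA x s) (lvB x s) i - charVec (lvA x s) (lvB x s) j| else 0)
      = ∑ j : Fin n, if G.Adj i j then |x i - x j| else 0 := by
    intro i
    rw [integral_finset_sum _ (fun j _ => hint i j)]
    refine Finset.sum_congr rfl fun j _ => ?_
    by_cases h : G.Adj i j
    · simp only [h, if_true, charVec_lv]
      exact int_absdiff (hx i) (hx j)
    · simp [h]
  simp only [this]
  simp [TVp, Real.rpow_one]

lemma coareaN (x : Fin n → ℝ) (hx : ∀ i, |x i| ≤ 1) :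
    Np G 1 x = ∫ s in Set.Ioo (0:ℝ) 1, (volG G (lvA x s ∪ lvB x s) : ℝ) := by
  have hint : ∀ i : Fin n, Integrable (fun s : ℝ =>
      (G.degree i : ℝ) * |charVec (lvA x s) (lvB x s) i|)
      (volume.restrict (Set.Ioo (0:ℝ) 1)) := fun i =>
    integrable_level x (fun p => (G.degree i : ℝ) * |charVec p.1 p.2 i|)
  have hpt : ∀ s ∈ Set.Ioo (0:ℝ) 1, (volG G (lvA x s ∪ lvB x s) : ℝ)
      = ∑ i : Fin n, (G.degree i : ℝ) * |charVec (lvA x s) (lvB x s) i| := by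
    intro s hs
    rw [N_charVec G (lvA x s) (lvB x s) (disjoint_lv x (le_of_lt hs.1))]
  rw [setIntegral_congr_fun measurableSet_Ioo hpt, integral_finset_sum _ (fun i _ => hint i)]
  have : ∀ i : Fin n, (∫ s in Set.Ioo (0:ℝ) 1,
      (G.degree i : ℝ) * |charVec (lvA x s) (lvB x s) i|) = (G.degree i : ℝ) * |x i| := by
    intro i
    rw [integral_const_mul]
    simp only [charVec_lv]
    rw [int_absval (hx i)]
  simp only [this]
  simp [Np, Real.rpow_one]


section
variable {n : ℕ}


@[simp] lemma charVec_eq_one {A B : Finset (Fin n)} {v : Fin n} (h : v ∈ A) :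
    charVec A B v = 1 := by simp [charVec, h]

lemma charVec_eq_negone {A B : Finset (Fin n)} {v : Fin n} (hAB : Disjoint A B) (h : v ∈ B) :
    charVec A B v = -1 := by
  have : v ∉ A := fun hA => Finset.disjoint_left.1 hAB hA h
  simp [charVec, this, h]

lemma charVec_nonneg {A B : Finset (Fin n)} {v : Fin n} (h : v ∉ B) :
    0 ≤ charVec A B v := by
  unfold charVec
  split_ifs <;> first | norm_num | exact absurd ‹v ∈ B› h

lemma charVec_nonpos {A B : Finset (Fin n)} {v : Fin n} (h : v ∉ A) :
    charVec A B v ≤ 0 := by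
  unfold charVec
  split_ifs <;> first | norm_num | exact absurd ‹v ∈ A› h

lemma abs_charVec_le_one (A B : Finset (Fin n)) (v : Fin n) : |charVec A B v| ≤ 1 := by
  unfold charVec
  split_ifs <;> norm_num

/-- The key structural lemma: the level sets of a convex combination of characteristic
vectors along a chain are themselves members of the chain. -/
lemma level_mem_chain {C : Set (Finset (Fin n) × Finset (Fin n))} (hC : IsChain pairLE C)
    (hdisj : ∀ p ∈ C, Disjoint p.1 p.2)
    {ι : Type} (t : Finset ι) (w : ι → ℝ) (z : ι → Finset (Fin n) × Finset (Fin n))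
    (hw : ∀ i ∈ t, 0 ≤ w i) (hw1 : ∑ i ∈ t, w i = 1) (hz : ∀ i ∈ t, z i ∈ C)
    {x : Fin n → ℝ} (hxv : ∀ v, x v = ∑ i ∈ t, w i * charVec (z i).1 (z i).2 v)
    {s : ℝ} (hs0 : 0 < s) (hs1 : s < 1) :
    ∃ i ∈ t, lvA x s = (z i).1 ∧ lvB x s = (z i).2 := by
  classical
  set m : ι → ℕ := fun i => (z i).1.card + (z i).2.card with hm
  have comp : ∀ i ∈ t, ∀ j ∈ t, pairLE (z i) (z j) ∨ pairLE (z j) (z i) := by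
    intro i hi j hj
    by_cases h : z i = z j
    · left; rw [h]; exact ⟨subset_rfl, subset_rfl⟩
    · exact hC (hz i hi) (hz j hj) h
  have least_of_min : ∀ U : Finset ι, U ⊆ t → ∀ i₀ ∈ U, (∀ j ∈ U, m i₀ ≤ m j) →
      ∀ j ∈ U, pairLE (z i₀) (z j) := by
    intro U hU i₀ hi₀ hmin j hj
    rcases comp i₀ (hU hi₀) j (hU hj) with h | h
    · exact h
    · have h1 : (z j).1 = (z i₀).1 := by
        refine Finset.eq_of_subset_of_card_le h.1 ?_
        have := Finset.card_le_card h.1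
        have := Finset.card_le_card h.2
        have := hmin j hj
        simp only [hm] at *
        omega
      have h2 : (z j).2 = (z i₀).2 := by
        refine Finset.eq_of_subset_of_card_le h.2 ?_
        have := Finset.card_le_card h.1
        have := Finset.card_le_card h.2
        have := hmin j hj
        simp only [hm] at *
        omega
      exact ⟨h1 ▸ subset_rfl, h2 ▸ subset_rfl⟩
  have greatest_of_max : ∀ U : Finset ι, U ⊆ t → ∀ i₀ ∈ U, (∀ j ∈ U, m j ≤ m i₀) →
      ∀ j ∈ U, pairLE (z j) (z i₀) := by
    intro U hU i₀ hi₀ hmax j hj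
    rcases comp i₀ (hU hi₀) j (hU hj) with h | h
    · have h1 : (z i₀).1 = (z j).1 := by
        refine Finset.eq_of_subset_of_card_le h.1 ?_
        have := Finset.card_le_card h.1
        have := Finset.card_le_card h.2
        have := hmax j hj
        simp only [hm] at *
        omega
      have h2 : (z i₀).2 = (z j).2 := by
        refine Finset.eq_of_subset_of_card_le h.2 ?_
        have := Finset.card_le_card h.1
        have := Finset.card_le_card h.2
        have := hmax j hj
        simp only [hm] at *
        omega
      exact ⟨h1 ▸ subset_rfl, h2 ▸ subset_rfl⟩
    · exact h
  set SS : ι → ℝ := fun i => ∑ j ∈ t.filter (fun j => pairLE (z i) (z j)), w j with hSS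
  set Good : Finset ι := t.filter (fun i => s < SS i) with hGood
  have htne : t.Nonempty := by
    rcases Finset.eq_empty_or_nonempty t with h | h
    · rw [h, Finset.sum_empty] at hw1; norm_num at hw1
    · exact h
  have hGoodne : Good.Nonempty := by
    obtain ⟨i₀, hi₀, hmin⟩ := Finset.exists_min_image t m htne
    have hfil : t.filter (fun j => pairLE (z i₀) (z j)) = t := by
      refine Finset.filter_true_of_mem fun j hj => ?_
      exact least_of_min t subset_rfl i₀ hi₀ hmin j hj
    refine ⟨i₀, ?_⟩
    rw [hGood, Finset.mem_filter]
    refine ⟨hi₀, ?_⟩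
    rw [hSS]
    simp only
    rw [hfil, hw1]
    exact hs1
  obtain ⟨istar, histar, hmax⟩ := Finset.exists_max_image Good m hGoodne
  have histart : istar ∈ t := (Finset.mem_filter.1 histar).1
  have hsSS : s < SS istar := (Finset.mem_filter.1 histar).2
  refine ⟨istar, histart, ?_, ?_⟩
  · -- lvA x s = (z istar).1
    apply Finset.Subset.antisymm
    · -- lvA ⊆
      intro v hv
      rw [mem_lvA] at hv
      rw [hxv v] at hv
      set U : Finset ι := t.filter (fun j => v ∈ (z j).1) with hU
      have hle : (∑ i ∈ t, w i * charVec (z i).1 (z i).2 v) ≤ ∑ j ∈ U, w j := by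
        rw [← Finset.sum_filter_add_sum_filter_not t (fun j => v ∈ (z j).1)
          (fun i => w i * charVec (z i).1 (z i).2 v)]
        have e1 : (∑ i ∈ t.filter (fun j => v ∈ (z j).1), w i * charVec (z i).1 (z i).2 v)
            = ∑ j ∈ U, w j := by
          refine Finset.sum_congr rfl fun i hi => ?_
          rw [charVec_eq_one (Finset.mem_filter.1 hi).2, mul_one]
        have e2 : (∑ i ∈ t.filter (fun j => ¬ v ∈ (z j).1), w i * charVec (z i).1 (z i).2 v)
            ≤ 0 := by
          refine Finset.sum_nonpos fun i hi => ?_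
          have hi' := Finset.mem_filter.1 hi
          exact mul_nonpos_of_nonneg_of_nonpos (hw i hi'.1) (charVec_nonpos hi'.2)
        rw [e1]; linarith
      have hUne : U.Nonempty := by
        rcases Finset.eq_empty_or_nonempty U with h | h
        · rw [h, Finset.sum_empty] at hle; linarith
        · exact h
      obtain ⟨i₀, hi₀U, hminU⟩ := Finset.exists_min_image U m hUne
      have hi₀t : i₀ ∈ t := (Finset.mem_filter.1 hi₀U).1
      have hleast := least_of_min U (Finset.filter_subset _ _) i₀ hi₀U hminU
      have hSSbig : (∑ j ∈ U, w j) ≤ SS i₀ := by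
        refine Finset.sum_le_sum_of_subset_of_nonneg ?_ (fun j hj _ => hw j (Finset.filter_subset _ _ hj)) 
        intro j hj
        rw [Finset.mem_filter]
        exact ⟨(Finset.mem_filter.1 hj).1, hleast j hj⟩
      have hi₀Good : i₀ ∈ Good := by
        rw [hGood, Finset.mem_filter]
        exact ⟨hi₀t, by linarith⟩
      have hzle : pairLE (z i₀) (z istar) :=
        greatest_of_max Good (Finset.filter_subset _ _) istar histar hmax i₀ hi₀Good
      exact hzle.1 (Finset.mem_filter.1 hi₀U).2
    · -- ⊇
      intro v hv
      rw [mem_lvA, hxv v]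
      have split := Finset.sum_filter_add_sum_filter_not t (fun j => pairLE (z istar) (z j))
        (fun i => w i * charVec (z i).1 (z i).2 v)
      have e1 : (∑ i ∈ t.filter (fun j => pairLE (z istar) (z j)),
          w i * charVec (z i).1 (z i).2 v) = SS istar := by
        refine Finset.sum_congr rfl fun i hi => ?_
        have hi' := Finset.mem_filter.1 hi
        rw [charVec_eq_one (hi'.2.1 hv), mul_one]
      have e2 : 0 ≤ (∑ i ∈ t.filter (fun j => ¬ pairLE (z istar) (z j)),
          w i * charVec (z i).1 (z i).2 v) := by
        refine Finset.sum_nonneg fun i hi => ?_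
        have hi' := Finset.mem_filter.1 hi
        have hcmp : pairLE (z i) (z istar) := by
          rcases comp i hi'.1 istar histart with h | h
          · exact h
          · exact absurd h hi'.2
        have hvB : v ∉ (z i).2 := by
          intro hvB
          have : v ∈ (z istar).2 := hcmp.2 hvB
          exact Finset.disjoint_left.1 (hdisj _ (hz istar histart)) hv this
        exact mul_nonneg (hw i hi'.1) (charVec_nonneg hvB)
      calc s < SS istar := hsSS
        _ ≤ _ := by rw [← split, e1]; linarith
  · -- lvB x s = (z istar).2
    apply Finset.Subset.antisymm
    · intro v hv
      rw [mem_lvB] at hv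
      rw [hxv v] at hv
      set U : Finset ι := t.filter (fun j => v ∈ (z j).2) with hU
      have hle : -(∑ j ∈ U, w j) ≤ (∑ i ∈ t, w i * charVec (z i).1 (z i).2 v) := by
        rw [← Finset.sum_filter_add_sum_filter_not t (fun j => v ∈ (z j).2)
          (fun i => w i * charVec (z i).1 (z i).2 v)]
        have e1 : (∑ i ∈ t.filter (fun j => v ∈ (z j).2), w i * charVec (z i).1 (z i).2 v)
            = -∑ j ∈ U, w j := by
          rw [← Finset.sum_neg_distrib]
          refine Finset.sum_congr rfl fun i hi => ?_
          have hi' := Finset.mem_filter.1 hi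
          rw [charVec_eq_negone (hdisj _ (hz i hi'.1)) hi'.2]
          ring
        have e2 : 0 ≤ (∑ i ∈ t.filter (fun j => ¬ v ∈ (z j).2), w i * charVec (z i).1 (z i).2 v) := by
          refine Finset.sum_nonneg fun i hi => ?_
          have hi' := Finset.mem_filter.1 hi
          exact mul_nonneg (hw i hi'.1) (charVec_nonneg hi'.2)
        rw [e1]; linarith
      have hUne : U.Nonempty := by
        rcases Finset.eq_empty_or_nonempty U with h | h
        · rw [h, Finset.sum_empty] at hle; simp only [neg_zero] at hle; linarith
        · exact h
      obtain ⟨i₀, hi₀U, hminU⟩ := Finset.exists_min_image U m hUne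
      have hi₀t : i₀ ∈ t := (Finset.mem_filter.1 hi₀U).1
      have hleast := least_of_min U (Finset.filter_subset _ _) i₀ hi₀U hminU
      have hSSbig : (∑ j ∈ U, w j) ≤ SS i₀ := by
        refine Finset.sum_le_sum_of_subset_of_nonneg ?_ (fun j hj _ => hw j (Finset.filter_subset _ _ hj))
        intro j hj
        rw [Finset.mem_filter]
        exact ⟨(Finset.mem_filter.1 hj).1, hleast j hj⟩
      have hi₀Good : i₀ ∈ Good := by
        rw [hGood, Finset.mem_filter]
        exact ⟨hi₀t, by linarith⟩
      have hzle : pairLE (z i₀) (z istar) :=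
        greatest_of_max Good (Finset.filter_subset _ _) istar histar hmax i₀ hi₀Good
      exact hzle.2 (Finset.mem_filter.1 hi₀U).2
    · intro v hv
      rw [mem_lvB, hxv v]
      have split := Finset.sum_filter_add_sum_filter_not t (fun j => pairLE (z istar) (z j))
        (fun i => w i * charVec (z i).1 (z i).2 v)
      have e1 : (∑ i ∈ t.filter (fun j => pairLE (z istar) (z j)),
          w i * charVec (z i).1 (z i).2 v) = -SS istar := by
        rw [hSS]
        simp only
        rw [← Finset.sum_neg_distrib]
        refine Finset.sum_congr rfl fun i hi => ?_
        have hi' := Finset.mem_filter.1 hi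
        rw [charVec_eq_negone (hdisj _ (hz i hi'.1)) (hi'.2.2 hv)]
        ring
      have e2 : (∑ i ∈ t.filter (fun j => ¬ pairLE (z istar) (z j)),
          w i * charVec (z i).1 (z i).2 v) ≤ 0 := by
        refine Finset.sum_nonpos fun i hi => ?_
        have hi' := Finset.mem_filter.1 hi
        have hcmp : pairLE (z i) (z istar) := by
          rcases comp i hi'.1 istar histart with h | h
          · exact h
          · exact absurd h hi'.2
        have hvA : v ∉ (z i).1 := by
          intro hvA
          have : v ∈ (z istar).1 := hcmp.1 hvA
          exact Finset.disjoint_left.1 (hdisj _ (hz istar histart)) this hv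
        exact mul_nonpos_of_nonneg_of_nonpos (hw i hi'.1) (charVec_nonpos hvA)
      have : (∑ i ∈ t, w i * charVec (z i).1 (z i).2 v) ≤ -SS istar := by
        rw [← split, e1]; linarith
      linarith

end


variable {n : ℕ}

lemma hull_rep {C : Set (Finset (Fin n) × Finset (Fin n))} {x : Fin n → ℝ}
    (hx : x ∈ convexHull ℝ ((fun ab => charVec ab.1 ab.2) '' C)) :
    ∃ (ι : Type) (t : Finset ι) (w : ι → ℝ) (z : ι → Finset (Fin n) × Finset (Fin n)),
      (∀ i ∈ t, 0 ≤ w i) ∧ (∑ i ∈ t, w i) = 1 ∧ (∀ i ∈ t, z i ∈ C) ∧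
      ∀ v, x v = ∑ i ∈ t, w i * charVec (z i).1 (z i).2 v := by
  rw [convexHull_eq] at hx
  obtain ⟨ι, t, w, zv, hw, hw1, hz, hxc⟩ := hx
  have hex : ∀ i : ι, ∃ q : Finset (Fin n) × Finset (Fin n),
      i ∈ t → q ∈ C ∧ charVec q.1 q.2 = zv i := by
    intro i
    by_cases hi : i ∈ t
    · obtain ⟨q, hqC, hqe⟩ := hz i hi
      exact ⟨q, fun _ => ⟨hqC, hqe⟩⟩
    · exact ⟨(∅, ∅), fun h => absurd h hi⟩
  choose z hzp using hex
  refine ⟨ι, t, w, z, hw, hw1, fun i hi => (hzp i hi).1, fun v => ?_⟩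
  have hxe : x = ∑ i ∈ t, w i • zv i := by
    rw [← hxc, Finset.centerMass, hw1, inv_one, one_smul]
  rw [hxe, Finset.sum_apply]
  refine Finset.sum_congr rfl fun i hi => ?_
  rw [Pi.smul_apply, smul_eq_mul, ← (hzp i hi).2]

lemma abs_le_one_of_rep {ι : Type} (t : Finset ι) (w : ι → ℝ)
    (z : ι → Finset (Fin n) × Finset (Fin n)) (hw : ∀ i ∈ t, 0 ≤ w i)
    (hw1 : (∑ i ∈ t, w i) = 1) {x : Fin n → ℝ}
    (hxv : ∀ v, x v = ∑ i ∈ t, w i * charVec (z i).1 (z i).2 v) :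
    ∀ v, |x v| ≤ 1 := by
  intro v
  rw [hxv v]
  calc |∑ i ∈ t, w i * charVec (z i).1 (z i).2 v|
      ≤ ∑ i ∈ t, |w i * charVec (z i).1 (z i).2 v| := Finset.abs_sum_le_sum_abs _ _
    _ ≤ ∑ i ∈ t, w i := by
        refine Finset.sum_le_sum fun i hi => ?_
        rw [abs_mul, abs_of_nonneg (hw i hi)]
        have h1 := abs_charVec_le_one (z i).1 (z i).2 v
        have h2 := hw i hi
        nlinarith
    _ = 1 := hw1

lemma chain_least {C : Set (Finset (Fin n) × Finset (Fin n))} (hC : IsChain pairLE C)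
    {ι : Type} (t : Finset ι) (z : ι → Finset (Fin n) × Finset (Fin n))
    (hz : ∀ i ∈ t, z i ∈ C) (ht : t.Nonempty) :
    ∃ i₀ ∈ t, ∀ j ∈ t, pairLE (z i₀) (z j) := by
  classical
  obtain ⟨i₀, hi₀, hmin⟩ := Finset.exists_min_image t
    (fun i => (z i).1.card + (z i).2.card) ht
  refine ⟨i₀, hi₀, fun j hj => ?_⟩
  by_cases h : z i₀ = z j
  · rw [h]; exact ⟨subset_rfl, subset_rfl⟩
  rcases hC (hz i₀ hi₀) (hz j hj) h with h' | h'
  · exact h'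
  · have h1 : (z j).1 = (z i₀).1 := by
      refine Finset.eq_of_subset_of_card_le h'.1 ?_
      have := Finset.card_le_card h'.1
      have := Finset.card_le_card h'.2
      have := hmin j hj
      omega
    have h2 : (z j).2 = (z i₀).2 := by
      refine Finset.eq_of_subset_of_card_le h'.2 ?_
      have := Finset.card_le_card h'.1
      have := Finset.card_le_card h'.2
      have := hmin j hj
      omega
    exact ⟨h1 ▸ subset_rfl, h2 ▸ subset_rfl⟩

lemma exists_unit_coord_of_hull {C : Set (Finset (Fin n) × Finset (Fin n))}
    (hC : IsChain pairLE C) (hval : ∀ p ∈ C, Disjoint p.1 p.2 ∧ (p.1 ∪ p.2).Nonempty)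
    {x : Fin n → ℝ} (hx : x ∈ convexHull ℝ ((fun ab => charVec ab.1 ab.2) '' C)) :
    ∃ v, x v = 1 ∨ x v = -1 := by
  obtain ⟨ι, t, w, z, hw, hw1, hzC, hxv⟩ := hull_rep hx
  have htne : t.Nonempty := by
    rcases Finset.eq_empty_or_nonempty t with h | h
    · rw [h, Finset.sum_empty] at hw1; norm_num at hw1
    · exact h
  obtain ⟨i₀, hi₀, hleast⟩ := chain_least hC t z hzC htne
  obtain ⟨v, hv⟩ := (hval _ (hzC i₀ hi₀)).2
  rw [Finset.mem_union] at hv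
  rcases hv with hv | hv
  · refine ⟨v, Or.inl ?_⟩
    rw [hxv v]
    rw [show (∑ i ∈ t, w i * charVec (z i).1 (z i).2 v) = ∑ i ∈ t, w i from
      Finset.sum_congr rfl fun i hi => by
        rw [charVec_eq_one ((hleast i hi).1 hv), mul_one]]
    exact hw1
  · refine ⟨v, Or.inr ?_⟩
    rw [hxv v]
    rw [show (∑ i ∈ t, w i * charVec (z i).1 (z i).2 v) = ∑ i ∈ t, w i * (-1) from
      Finset.sum_congr rfl fun i hi => by
        rw [charVec_eq_negone (hval _ (hzC i hi)).1 ((hleast i hi).2 hv)]]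
    rw [← Finset.sum_mul, hw1]; ring

lemma volG_one_le {G : SimpleGraph (Fin n)} [DecidableRel G.Adj] (hdeg : ∀ i, 0 < G.degree i)
    {A : Finset (Fin n)} (hA : A.Nonempty) : (1:ℝ) ≤ (volG G A : ℝ) := by
  obtain ⟨v, hv⟩ := hA
  have h1 : 1 ≤ volG G A := by
    calc 1 ≤ G.degree v := hdeg v
      _ ≤ ∑ i ∈ A, G.degree i := Finset.single_le_sum (f := fun i => G.degree i) (fun i _ => Nat.zero_le _) hv
  exact_mod_cast h1

lemma TV_le_of_hull (G : SimpleGraph (Fin n)) [DecidableRel G.Adj]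
    (hdeg : ∀ i, 0 < G.degree i) {C : Set (Finset (Fin n) × Finset (Fin n))}
    (hC : IsChain pairLE C) (hval : ∀ p ∈ C, Disjoint p.1 p.2 ∧ (p.1 ∪ p.2).Nonempty)
    {r : ℝ} (hr : ∀ p ∈ C, (eBoundary G p.1 : ℝ) + (eBoundary G p.2 : ℝ)
      ≤ r * (volG G (p.1 ∪ p.2) : ℝ))
    {x : Fin n → ℝ} (hx : x ∈ convexHull ℝ ((fun ab => charVec ab.1 ab.2) '' C)) :
    TVp G 1 x ≤ r * Np G 1 x ∧ 1 ≤ Np G 1 x := by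
  obtain ⟨ι, t, w, z, hw, hw1, hzC, hxv⟩ := hull_rep hx
  have hxb : ∀ v, |x v| ≤ 1 := abs_le_one_of_rep t w z hw hw1 hxv
  have hlev : ∀ s ∈ Set.Ioo (0:ℝ) 1, ∃ p ∈ C, lvA x s = p.1 ∧ lvB x s = p.2 := by
    intro s hs
    obtain ⟨i, hi, h1, h2⟩ := level_mem_chain hC (fun p hp => (hval p hp).1) t w z hw hw1
      hzC hxv hs.1 hs.2
    exact ⟨z i, hzC i hi, h1, h2⟩
  have hI1 : Integrable (fun s : ℝ => (eBoundary G (lvA x s) : ℝ) + (eBoundary G (lvB x s) : ℝ))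
      (volume.restrict (Set.Ioo (0:ℝ) 1)) :=
    integrable_level x (fun p => (eBoundary G p.1 : ℝ) + (eBoundary G p.2 : ℝ))
  have hI2 : Integrable (fun s : ℝ => (volG G (lvA x s ∪ lvB x s) : ℝ))
      (volume.restrict (Set.Ioo (0:ℝ) 1)) :=
    integrable_level x (fun p => (volG G (p.1 ∪ p.2) : ℝ))
  constructor
  · rw [coareaTV G x hxb, coareaN G x hxb, ← integral_const_mul]
    refine setIntegral_mono_on hI1 (hI2.const_mul r) measurableSet_Ioo ?_
    intro s hs
    obtain ⟨p, hpC, h1, h2⟩ := hlev s hs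
    rw [h1, h2]
    exact hr p hpC
  · rw [coareaN G x hxb]
    have hone : (∫ (_ : ℝ) in Set.Ioo (0:ℝ) 1, (1:ℝ)) = 1 := by
      rw [setIntegral_const, measureReal_def, Real.volume_Ioo, smul_eq_mul, mul_one]
      norm_num
    have hmono : (∫ (_ : ℝ) in Set.Ioo (0:ℝ) 1, (1:ℝ))
        ≤ ∫ s in Set.Ioo (0:ℝ) 1, (volG G (lvA x s ∪ lvB x s) : ℝ) := by
      refine setIntegral_mono_on (integrable_const _) hI2 measurableSet_Ioo ?_
      intro s hs
      obtain ⟨p, hpC, h1, h2⟩ := hlev s hs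
      rw [h1, h2]
      exact volG_one_le hdeg (hval p hpC).2
    linarith

lemma genNeg_pos_facts {S : Set (Fin n → ℝ)} {k : ℕ} (hk : 1 ≤ k) (h : k ≤ genNeg S) :
    S.Nonempty ∧ SymmSet S := by
  by_cases hcon : S.Nonempty ∧ SymmSet S
  · exact hcon
  · rw [genNeg, if_neg hcon] at h; omega

lemma mem_geomComplex {𝒜 : Set (Finset (Fin n) × Finset (Fin n))} {x : Fin n → ℝ} :
    x ∈ geomComplex 𝒜 ↔ ∃ C, C ⊆ 𝒜 ∧ IsChain pairLE C ∧
      x ∈ convexHull ℝ ((fun ab => charVec ab.1 ab.2) '' C) := by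
  simp only [geomComplex, Set.mem_iUnion]
  constructor
  · rintro ⟨C, h1, h2, h3⟩; exact ⟨C, h1, h2, h3⟩
  · rintro ⟨C, h1, h2, h3⟩; exact ⟨C, h1, h2, h3⟩

lemma geomComplex_compact (𝒜 : Set (Finset (Fin n) × Finset (Fin n))) :
    IsCompact (geomComplex 𝒜) := by
  rw [geomComplex]
  refine isCompact_iUnion fun C => ?_
  by_cases h1 : C ⊆ 𝒜
  · by_cases h2 : IsChain pairLE C
    · simp only [h1, h2, Set.iUnion_true]
      exact (Set.toFinite C).image _ |>.isCompact_convexHull ℝ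
    · simp [h2]
  · simp [h1]

lemma charVec_swap {A B : Finset (Fin n)} (h : Disjoint A B) :
    charVec B A = -charVec A B := by
  funext i
  have hi : i ∈ A → i ∉ B := fun hA => Finset.disjoint_left.1 h hA
  unfold charVec
  by_cases h1 : i ∈ A <;> by_cases h2 : i ∈ B <;> simp_all

lemma pairLE_swap {a b : Finset (Fin n) × Finset (Fin n)} (h : pairLE a b) :
    pairLE (a.2, a.1) (b.2, b.1) := ⟨h.2, h.1⟩

lemma geomComplex_symm {𝒜 : Set (Finset (Fin n) × Finset (Fin n))}
    (hval : ∀ ab ∈ 𝒜, Disjoint ab.1 ab.2)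
    (hsw : ∀ ab ∈ 𝒜, (ab.2, ab.1) ∈ 𝒜) : SymmSet (geomComplex 𝒜) := by
  intro x hx
  rw [mem_geomComplex] at hx ⊢
  obtain ⟨C, hC𝒜, hCch, hx⟩ := hx
  refine ⟨(fun ab : Finset (Fin n) × Finset (Fin n) => (ab.2, ab.1)) '' C, ?_, ?_, ?_⟩
  · rintro p ⟨q, hq, rfl⟩
    exact hsw q (hC𝒜 hq)
  · rintro p ⟨q, hq, rfl⟩ p' ⟨q', hq', rfl⟩ hne
    have hqq : q ≠ q' := by rintro rfl; exact hne rfl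
    rcases hCch hq hq' hqq with h | h
    · exact Or.inl (pairLE_swap h)
    · exact Or.inr (pairLE_swap h)
  · obtain ⟨ι, t, w, z, hw, hw1, hzC, hxv⟩ := hull_rep hx
    have key : -x = t.centerMass w (fun i => charVec (z i).2 (z i).1) := by
      rw [Finset.centerMass, hw1, inv_one, one_smul]
      funext v
      rw [Pi.neg_apply, hxv v, Finset.sum_apply, ← Finset.sum_neg_distrib]
      refine Finset.sum_congr rfl fun i hi => ?_
      rw [Pi.smul_apply, smul_eq_mul, charVec_swap (hval _ (hC𝒜 (hzC i hi)))]
      simp only [Pi.neg_apply]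
      ring
    rw [key]
    refine Finset.centerMass_mem_convexHull t hw (by rw [hw1]; norm_num) fun i hi => ?_
    exact ⟨((z i).2, (z i).1), ⟨z i, hzC i hi, rfl⟩, rfl⟩

lemma geom_zero_not_mem {𝒜 : Set (Finset (Fin n) × Finset (Fin n))}
    (hval : ∀ ab ∈ 𝒜, Disjoint ab.1 ab.2 ∧ (ab.1 ∪ ab.2).Nonempty) :
    (0 : Fin n → ℝ) ∉ geomComplex 𝒜 := by
  intro h
  rw [mem_geomComplex] at h
  obtain ⟨C, hC𝒜, hCch, hx⟩ := h
  obtain ⟨v, hv⟩ := exists_unit_coord_of_hull hCch (fun p hp => hval p (hC𝒜 hp)) hx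
  rcases hv with hv | hv <;> simp at hv

lemma TVp_nonneg (G : SimpleGraph (Fin n)) [DecidableRel G.Adj] (x : Fin n → ℝ) :
    0 ≤ TVp G 1 x := by
  rw [TVp]
  have : (0:ℝ) ≤ ∑ i : Fin n, ∑ j : Fin n, if G.Adj i j then |x i - x j| ^ (1:ℝ) else 0 := by
    refine Finset.sum_nonneg fun i _ => Finset.sum_nonneg fun j _ => ?_
    split_ifs
    · rw [Real.rpow_one]; exact abs_nonneg _
    · norm_num
  linarith

lemma Np_nonneg (G : SimpleGraph (Fin n)) [DecidableRel G.Adj] (x : Fin n → ℝ) :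
    0 ≤ Np G 1 x := by
  rw [Np]
  refine Finset.sum_nonneg fun i _ => ?_
  have : (0:ℝ) ≤ |x i| ^ (1:ℝ) := by rw [Real.rpow_one]; exact abs_nonneg _
  positivity

lemma Fp_nonneg (G : SimpleGraph (Fin n)) [DecidableRel G.Adj] (x : Fin n → ℝ) :
    0 ≤ Fp G 1 x := div_nonneg (TVp_nonneg G x) (Np_nonneg G x)

lemma row_sum_const (G : SimpleGraph (Fin n)) [DecidableRel G.Adj] (i : Fin n) (c : ℝ) :
    (∑ j : Fin n, if G.Adj i j then c else 0) = (G.degree i : ℝ) * c := by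
  have h1 : (∑ j : Fin n, if G.Adj i j then c else 0)
      = ∑ j : Fin n, if j ∈ G.neighborFinset i then c else 0 := by
    refine Finset.sum_congr rfl fun j _ => ?_
    simp only [SimpleGraph.mem_neighborFinset]
  rw [h1, show (∑ j : Fin n, if j ∈ G.neighborFinset i then c else 0)
      = ∑ j ∈ Finset.univ ∩ G.neighborFinset i, c from Finset.sum_ite_mem _ _ _,
    Finset.univ_inter, Finset.sum_const, SimpleGraph.degree]
  simp [mul_comm]

lemma TVp_le_Np (G : SimpleGraph (Fin n)) [DecidableRel G.Adj] (x : Fin n → ℝ) :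
    TVp G 1 x ≤ Np G 1 x := by
  rw [TVp, Np]
  rw [div_le_iff₀ (by norm_num : (0:ℝ) < 2)]
  have hle : (∑ i : Fin n, ∑ j : Fin n, if G.Adj i j then |x i - x j| ^ (1:ℝ) else 0)
      ≤ (∑ i : Fin n, ∑ j : Fin n, if G.Adj i j then |x i| else 0)
        + ∑ i : Fin n, ∑ j : Fin n, if G.Adj i j then |x j| else 0 := by
    rw [← Finset.sum_add_distrib]
    refine Finset.sum_le_sum fun i _ => ?_
    rw [← Finset.sum_add_distrib]
    refine Finset.sum_le_sum fun j _ => ?_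
    split_ifs
    · rw [Real.rpow_one]; exact abs_sub _ _
    · norm_num
  have e1 : (∑ i : Fin n, ∑ j : Fin n, if G.Adj i j then |x i| else 0)
      = ∑ i : Fin n, (G.degree i : ℝ) * |x i| := by
    refine Finset.sum_congr rfl fun i _ => row_sum_const G i |x i|
  have e2 : (∑ i : Fin n, ∑ j : Fin n, if G.Adj i j then |x j| else 0)
      = ∑ i : Fin n, (G.degree i : ℝ) * |x i| := by
    rw [Finset.sum_comm]
    refine Finset.sum_congr rfl fun j _ => ?_
    rw [show (∑ i : Fin n, if G.Adj i j then |x j| else 0)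
        = ∑ i : Fin n, if G.Adj j i then |x j| else 0 from
      Finset.sum_congr rfl fun i _ => if_congr (G.adj_comm i j) rfl rfl]
    exact row_sum_const G j |x j|
  have e3 : ∀ i : Fin n, (G.degree i : ℝ) * |x i| ^ (1:ℝ) = (G.degree i : ℝ) * |x i| := by
    intro i; rw [Real.rpow_one]
  calc (∑ i : Fin n, ∑ j : Fin n, if G.Adj i j then |x i - x j| ^ (1:ℝ) else 0)
      ≤ _ := hle
    _ = 2 * ∑ i : Fin n, (G.degree i : ℝ) * |x i| := by rw [e1, e2]; ring
    _ = (∑ i : Fin n, (G.degree i : ℝ) * |x i| ^ (1:ℝ)) * 2 := by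
        simp only [e3]; ring

lemma Fp_le_one (G : SimpleGraph (Fin n)) [DecidableRel G.Adj] (x : Fin n → ℝ) :
    Fp G 1 x ≤ 1 := by
  rw [Fp]
  rcases eq_or_lt_of_le (Np_nonneg G x) with h | h
  · rw [← h, div_zero]; norm_num
  · rw [div_le_one h]; exact TVp_le_Np G x

lemma claim1 (G : SimpleGraph (Fin n)) [DecidableRel G.Adj] (hdeg : ∀ i, 0 < G.degree i)
    {k : ℕ} (hk1 : 1 ≤ k) {𝒜 : Set (Finset (Fin n) × Finset (Fin n))}
    (hval : ∀ ab ∈ 𝒜, Disjoint ab.1 ab.2 ∧ (ab.1 ∪ ab.2).Nonempty)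
    (hgen : k ≤ genNeg (geomComplex 𝒜)) :
    ∃ r' : ℝ, (∃ S, Admissible S ∧ k ≤ genNeg S ∧ r' = sSup (Fp G 1 '' S)) ∧
      r' ≤ sSup ((fun ab : Finset (Fin n) × Finset (Fin n) =>
        ((eBoundary G ab.1 : ℝ) + (eBoundary G ab.2 : ℝ)) / (volG G (ab.1 ∪ ab.2) : ℝ)) '' 𝒜) := by
  set ratio := fun ab : Finset (Fin n) × Finset (Fin n) =>
    ((eBoundary G ab.1 : ℝ) + (eBoundary G ab.2 : ℝ)) / (volG G (ab.1 ∪ ab.2) : ℝ) with hratio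
  set r := sSup (ratio '' 𝒜) with hrdef
  obtain ⟨hSne, hSsym⟩ := genNeg_pos_facts hk1 hgen
  have hadm : Admissible (geomComplex 𝒜) :=
    ⟨geomComplex_compact 𝒜, geom_zero_not_mem hval, hSsym⟩
  refine ⟨sSup (Fp G 1 '' geomComplex 𝒜), ⟨geomComplex 𝒜, hadm, hgen, rfl⟩, ?_⟩
  refine csSup_le (hSne.image _) ?_
  rintro y ⟨x, hxS, rfl⟩
  rw [mem_geomComplex] at hxS
  obtain ⟨C, hC𝒜, hCch, hx⟩ := hxS
  have hrp : ∀ p ∈ C, (eBoundary G p.1 : ℝ) + (eBoundary G p.2 : ℝ)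
      ≤ r * (volG G (p.1 ∪ p.2) : ℝ) := by
    intro p hp
    have hvol : (0:ℝ) < (volG G (p.1 ∪ p.2) : ℝ) :=
      lt_of_lt_of_le one_pos (volG_one_le hdeg (hval p (hC𝒜 hp)).2)
    have h1 : ratio p ≤ r := le_csSup (Set.Finite.bddAbove (Set.toFinite _)) ⟨p, hC𝒜 hp, rfl⟩
    rw [hratio] at h1
    simp only at h1
    rw [div_le_iff₀ hvol] at h1
    exact h1
  obtain ⟨hTV, hN⟩ := TV_le_of_hull G hdeg hCch (fun p hp => hval p (hC𝒜 hp)) hrp hx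
  rw [Fp, div_le_iff₀ (by linarith : (0:ℝ) < Np G 1 x)]
  exact hTV

def goodPair (G : SimpleGraph (Fin n)) [DecidableRel G.Adj] (r : ℝ)
    (p : Finset (Fin n) × Finset (Fin n)) : Prop :=
  Disjoint p.1 p.2 ∧ (p.1 ∪ p.2).Nonempty ∧
    ((eBoundary G p.1 : ℝ) + (eBoundary G p.2 : ℝ)) / (volG G (p.1 ∪ p.2) : ℝ) ≤ r

def wgt (x : Fin n → ℝ) (p : Finset (Fin n) × Finset (Fin n)) : ℝ :=
  (volume ({u : ℝ | lvA x u = p.1 ∧ lvB x u = p.2} ∩ Set.Ioo (0:ℝ) 1)).toReal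

def gInt (G : SimpleGraph (Fin n)) [DecidableRel G.Adj] (r : ℝ) (x : Fin n → ℝ) :
    Fin n → ℝ :=
  ∫ s in Set.Ioo (0:ℝ) 1,
    (if goodPair G r (lvA x s, lvB x s) then charVec (lvA x s) (lvB x s) else 0)

def tInt (G : SimpleGraph (Fin n)) [DecidableRel G.Adj] (r : ℝ) (x : Fin n → ℝ) : ℝ :=
  ∫ s in Set.Ioo (0:ℝ) 1, (if goodPair G r (lvA x s, lvB x s) then (1:ℝ) else 0)

def rho (G : SimpleGraph (Fin n)) [DecidableRel G.Adj] (r : ℝ) (x : Fin n → ℝ) :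
    Fin n → ℝ := (tInt G r x)⁻¹ • gInt G r x

lemma wgt_nonneg (x : Fin n → ℝ) (p : Finset (Fin n) × Finset (Fin n)) : 0 ≤ wgt x p :=
  ENNReal.toReal_nonneg

lemma int_one_Ioo : (∫ (_ : ℝ) in Set.Ioo (0:ℝ) 1, (1:ℝ)) = 1 := by
  rw [setIntegral_const, measureReal_def, Real.volume_Ioo, smul_eq_mul, mul_one]
  norm_num

lemma sum_wgt (x : Fin n → ℝ) :
    (∑ p : Finset (Fin n) × Finset (Fin n), wgt x p) = 1 := by
  have h := integral_level x (fun _ : Finset (Fin n) × Finset (Fin n) => (1:ℝ))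
  rw [int_one_Ioo] at h
  have h2 : (∑ p : Finset (Fin n) × Finset (Fin n), wgt x p)
      = ∑ p : Finset (Fin n) × Finset (Fin n),
        (volume ({u : ℝ | lvA x u = p.1 ∧ lvB x u = p.2} ∩ Set.Ioo (0:ℝ) 1)).toReal • (1:ℝ) :=
    Finset.sum_congr rfl fun p _ => by rw [smul_eq_mul, mul_one, wgt]
  rw [h2, ← h]

lemma gInt_eq (G : SimpleGraph (Fin n)) [DecidableRel G.Adj] (r : ℝ) (x : Fin n → ℝ) :
    gInt G r x = ∑ p : Finset (Fin n) × Finset (Fin n),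
      wgt x p • (if goodPair G r p then charVec p.1 p.2 else 0) :=
  integral_level x (fun p => if goodPair G r p then charVec p.1 p.2 else 0)

lemma tInt_eq (G : SimpleGraph (Fin n)) [DecidableRel G.Adj] (r : ℝ) (x : Fin n → ℝ) :
    tInt G r x = ∑ p : Finset (Fin n) × Finset (Fin n),
      wgt x p • (if goodPair G r p then (1:ℝ) else 0) :=
  integral_level x (fun p => if goodPair G r p then (1:ℝ) else 0)

lemma TV_eq_sum (G : SimpleGraph (Fin n)) [DecidableRel G.Adj] {x : Fin n → ℝ}
    (hb : ∀ v, |x v| ≤ 1) :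
    TVp G 1 x = ∑ p : Finset (Fin n) × Finset (Fin n),
      wgt x p * ((eBoundary G p.1 : ℝ) + (eBoundary G p.2 : ℝ)) := by
  rw [coareaTV G x hb,
    integral_level x (fun p => (eBoundary G p.1 : ℝ) + (eBoundary G p.2 : ℝ))]
  refine Finset.sum_congr rfl fun p _ => smul_eq_mul _ _

lemma N_eq_sum (G : SimpleGraph (Fin n)) [DecidableRel G.Adj] {x : Fin n → ℝ}
    (hb : ∀ v, |x v| ≤ 1) :
    Np G 1 x = ∑ p : Finset (Fin n) × Finset (Fin n),
      wgt x p * (volG G (p.1 ∪ p.2) : ℝ) := by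
  rw [coareaN G x hb, integral_level x (fun p => (volG G (p.1 ∪ p.2) : ℝ))]
  refine Finset.sum_congr rfl fun p _ => smul_eq_mul _ _

lemma wgt_realized {x : Fin n → ℝ} {p : Finset (Fin n) × Finset (Fin n)} (h : wgt x p ≠ 0) :
    ∃ s ∈ Set.Ioo (0:ℝ) 1, lvA x s = p.1 ∧ lvB x s = p.2 := by
  by_contra hcon
  push_neg at hcon
  apply h
  have he : {u : ℝ | lvA x u = p.1 ∧ lvB x u = p.2} ∩ Set.Ioo (0:ℝ) 1 = ∅ := by
    ext s
    simp only [Set.mem_inter_iff, Set.mem_setOf_eq, Set.mem_empty_iff_false, iff_false, not_and]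
    intro h1 h2
    exact hcon s h2 h1.1 h1.2
  rw [wgt, he, measure_empty, ENNReal.toReal_zero]

lemma rho_props (G : SimpleGraph (Fin n)) [DecidableRel G.Adj]
    (hdeg : ∀ i, 0 < G.degree i) {r : ℝ} {x : Fin n → ℝ}
    (hb : ∀ v, |x v| ≤ 1) (hu : ∃ v, |x v| = 1) (hF : TVp G 1 x ≤ r * Np G 1 x) :
    0 < tInt G r x ∧ rho G r x ∈ geomComplex {p | goodPair G r p} := by
  classical
  have hreal := fun (p : Finset (Fin n) × Finset (Fin n)) (hp : wgt x p ≠ 0) =>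
    wgt_realized (x := x) (p := p) hp
  have hnice : ∀ p, wgt x p ≠ 0 → Disjoint p.1 p.2 ∧ (p.1 ∪ p.2).Nonempty := by
    intro p hp
    obtain ⟨s, hs, h1, h2⟩ := hreal p hp
    constructor
    · rw [← h1, ← h2]; exact disjoint_lv x hs.1.le
    · obtain ⟨v, hv⟩ := hu
      refine ⟨v, ?_⟩
      rw [← h1, ← h2, Finset.mem_union, mem_lvA, mem_lvB]
      rcases abs_eq (by norm_num : (0:ℝ) ≤ 1) |>.1 hv with h | h
      · left; rw [h]; exact hs.2
      · right; rw [h]; linarith [hs.2]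
  have hvolpos : ∀ p, wgt x p ≠ 0 → (0:ℝ) < (volG G (p.1 ∪ p.2) : ℝ) := fun p hp =>
    lt_of_lt_of_le one_pos (volG_one_le hdeg (hnice p hp).2)
  have hchain : ∀ p q, wgt x p ≠ 0 → wgt x q ≠ 0 → pairLE p q ∨ pairLE q p := by
    intro p q hp hq
    obtain ⟨s, hs, h1, h2⟩ := hreal p hp
    obtain ⟨s', hs', h1', h2'⟩ := hreal q hq
    rcases le_total s s' with h | h
    · right
      exact ⟨by rw [← h1, ← h1']; exact lvA_anti x h, by rw [← h2, ← h2']; exact lvB_anti x h⟩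
    · left
      exact ⟨by rw [← h1, ← h1']; exact lvA_anti x h, by rw [← h2, ← h2']; exact lvB_anti x h⟩
  have hex : ∃ p, goodPair G r p ∧ wgt x p ≠ 0 := by
    by_contra hcon
    push_neg at hcon
    have hexw : ∃ p, wgt x p ≠ 0 := by
      by_contra hcon2
      push_neg at hcon2
      have : (∑ p : Finset (Fin n) × Finset (Fin n), wgt x p) = 0 :=
        Finset.sum_eq_zero fun p _ => hcon2 p
      rw [sum_wgt x] at this
      norm_num at this
    obtain ⟨p₀, hp₀⟩ := hexw
    have hterm : ∀ p ∈ (Finset.univ : Finset (Finset (Fin n) × Finset (Fin n))),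
        wgt x p * (r * (volG G (p.1 ∪ p.2) : ℝ))
          ≤ wgt x p * ((eBoundary G p.1 : ℝ) + (eBoundary G p.2 : ℝ)) := by
      intro p _
      by_cases hp : wgt x p = 0
      · rw [hp]; ring_nf; norm_num
      · have hgood := hcon p
        have hni := hnice p hp
        have hrlt : r * (volG G (p.1 ∪ p.2) : ℝ)
            < (eBoundary G p.1 : ℝ) + (eBoundary G p.2 : ℝ) := by
          have hng : ¬ ((eBoundary G p.1 : ℝ) + (eBoundary G p.2 : ℝ))
              / (volG G (p.1 ∪ p.2) : ℝ) ≤ r := fun hle => hp (hgood ⟨hni.1, hni.2, hle⟩)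
          push_neg at hng
          rw [lt_div_iff₀ (hvolpos p hp)] at hng
          linarith
        have hwpos : 0 < wgt x p := lt_of_le_of_ne (wgt_nonneg x p) (Ne.symm hp)
        nlinarith
    have hstrict : ∃ p ∈ (Finset.univ : Finset (Finset (Fin n) × Finset (Fin n))),
        wgt x p * (r * (volG G (p.1 ∪ p.2) : ℝ))
          < wgt x p * ((eBoundary G p.1 : ℝ) + (eBoundary G p.2 : ℝ)) := by
      refine ⟨p₀, Finset.mem_univ _, ?_⟩
      have hgood := hcon p₀
      have hni := hnice p₀ hp₀
      have hrlt : r * (volG G (p₀.1 ∪ p₀.2) : ℝ)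
          < (eBoundary G p₀.1 : ℝ) + (eBoundary G p₀.2 : ℝ) := by
        have hng : ¬ ((eBoundary G p₀.1 : ℝ) + (eBoundary G p₀.2 : ℝ))
            / (volG G (p₀.1 ∪ p₀.2) : ℝ) ≤ r := fun hle => hp₀ (hgood ⟨hni.1, hni.2, hle⟩)
        push_neg at hng
        rw [lt_div_iff₀ (hvolpos p₀ hp₀)] at hng
        linarith
      have hwpos : 0 < wgt x p₀ := lt_of_le_of_ne (wgt_nonneg x p₀) (Ne.symm hp₀)
      nlinarith
    have hlt := Finset.sum_lt_sum hterm hstrict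
    rw [← TV_eq_sum G hb] at hlt
    have hrN : r * Np G 1 x = ∑ p : Finset (Fin n) × Finset (Fin n),
        wgt x p * (r * (volG G (p.1 ∪ p.2) : ℝ)) := by
      rw [N_eq_sum G hb, Finset.mul_sum]
      refine Finset.sum_congr rfl fun p _ => by ring
    rw [← hrN] at hlt
    linarith
  obtain ⟨p₀, hp₀g, hp₀w⟩ := hex
  set t : Finset (Finset (Fin n) × Finset (Fin n)) :=
    Finset.univ.filter (fun p => goodPair G r p ∧ wgt x p ≠ 0) with ht
  have hp₀t : p₀ ∈ t := by rw [ht, Finset.mem_filter]; exact ⟨Finset.mem_univ _, hp₀g, hp₀w⟩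
  have htInt : tInt G r x = ∑ p ∈ t, wgt x p := by
    rw [tInt_eq, ht, Finset.sum_filter]
    refine Finset.sum_congr rfl fun p _ => ?_
    by_cases h1 : goodPair G r p
    · by_cases h2 : wgt x p = 0
      · simp [h1, h2]
      · simp [h1, h2]
    · simp [h1]
  have htpos : 0 < tInt G r x := by
    rw [htInt]
    calc (0:ℝ) < wgt x p₀ := lt_of_le_of_ne (wgt_nonneg x p₀) (Ne.symm hp₀w)
      _ ≤ ∑ p ∈ t, wgt x p :=
        Finset.single_le_sum (fun p _ => wgt_nonneg x p) hp₀t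
  refine ⟨htpos, ?_⟩
  have hg : gInt G r x = ∑ p ∈ t, wgt x p • charVec p.1 p.2 := by
    rw [gInt_eq, ht, Finset.sum_filter]
    refine Finset.sum_congr rfl fun p _ => ?_
    by_cases h1 : goodPair G r p
    · by_cases h2 : wgt x p = 0
      · simp [h1, h2]
      · simp [h1, h2]
    · simp [h1]
  rw [mem_geomComplex]
  refine ⟨↑t, ?_, ?_, ?_⟩
  · intro p hp
    rw [Finset.mem_coe, ht, Finset.mem_filter] at hp
    exact hp.2.1
  · intro p hp q hq _
    rw [Finset.mem_coe, ht, Finset.mem_filter] at hp hq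
    exact hchain p q hp.2.2 hq.2.2
  · have hrc : rho G r x = t.centerMass (wgt x) (fun p => charVec p.1 p.2) := by
      rw [rho, Finset.centerMass, ← htInt, hg]
    rw [hrc]
    refine Finset.centerMass_mem_convexHull t (fun p _ => wgt_nonneg x p)
      (by rw [← htInt]; exact htpos) (fun p hp => ?_)
    exact ⟨p, Finset.mem_coe.mpr hp, rfl⟩

lemma norm_charVec_le_one (A B : Finset (Fin n)) : ‖charVec A B‖ ≤ 1 := by
  refine (pi_norm_le_iff_of_nonneg (by norm_num)).2 fun i => ?_
  rw [Real.norm_eq_abs]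
  exact abs_charVec_le_one A B i

lemma eventually_lt_iff_left {x₀ : Fin n → ℝ} {i : Fin n} {c : ℝ} (h : c ≠ x₀ i) :
    ∀ᶠ x : Fin n → ℝ in nhds x₀, ((c < x i) ↔ (c < x₀ i)) := by
  rcases lt_or_gt_of_ne h with h' | h'
  · filter_upwards [(isOpen_lt continuous_const (continuous_apply i)).mem_nhds h'] with x hx
    exact iff_of_true hx h'
  · filter_upwards [(isOpen_lt (continuous_apply i) continuous_const).mem_nhds h'] with x hx
    exact iff_of_false (not_lt.2 hx.le) (not_lt.2 h'.le)

lemma eventually_lt_iff_right {x₀ : Fin n → ℝ} {i : Fin n} {c : ℝ} (h : x₀ i ≠ c) :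
    ∀ᶠ x : Fin n → ℝ in nhds x₀, ((x i < c) ↔ (x₀ i < c)) := by
  rcases lt_or_gt_of_ne h with h' | h'
  · filter_upwards [(isOpen_lt (continuous_apply i) continuous_const).mem_nhds h'] with x hx
    exact iff_of_true hx h'
  · filter_upwards [(isOpen_lt continuous_const (continuous_apply i)).mem_nhds h'] with x hx
    exact iff_of_false (not_lt.2 hx.le) (not_lt.2 h'.le)

lemma continuous_levelmap {E : Type*} [NormedAddCommGroup E] [NormedSpace ℝ E]
    [CompleteSpace E] (h : Finset (Fin n) × Finset (Fin n) → E) :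
    Continuous (fun x : Fin n → ℝ => ∫ s in Set.Ioo (0:ℝ) 1, h (lvA x s, lvB x s)) := by
  rw [continuous_iff_continuousAt]
  intro x₀
  obtain ⟨C, hC⟩ : ∃ C : ℝ, ∀ p : Finset (Fin n) × Finset (Fin n), ‖h p‖ ≤ C :=
    ⟨Finset.univ.sup' ⟨(∅, ∅), Finset.mem_univ _⟩ (fun p => ‖h p‖),
      fun p => Finset.le_sup' (fun q => ‖h q‖) (Finset.mem_univ p)⟩
  refine continuousAt_of_dominated (F := fun x s => h (lvA x s, lvB x s))
    (bound := fun _ => C) ?_ ?_ (integrable_const C) ?_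
  · exact Filter.Eventually.of_forall fun x => aesm_level x h _
  · exact Filter.Eventually.of_forall fun x => Filter.Eventually.of_forall fun s => hC _
  · -- a.e. continuity in x
    set Sbad : Set ℝ := ⋃ i : Fin n, {x₀ i, -x₀ i} with hSbad
    have hfin : Sbad.Finite :=
      Set.finite_iUnion fun i => (Set.finite_singleton _).insert _
    have hnull : (volume.restrict (Set.Ioo (0:ℝ) 1)) Sbad = 0 := by
      have h1 : volume Sbad = 0 := hfin.measure_zero _
      exact le_antisymm (le_trans (Measure.restrict_le_self _) h1.le) zero_le
    have hae : ∀ᵐ s ∂(volume.restrict (Set.Ioo (0:ℝ) 1)), s ∉ Sbad :=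
      (MeasureTheory.compl_mem_ae_iff).2 hnull
    filter_upwards [hae] with s hs
    have hloc : ∀ᶠ x : Fin n → ℝ in nhds x₀, lvA x s = lvA x₀ s ∧ lvB x s = lvB x₀ s := by
      have hiff : ∀ᶠ x : Fin n → ℝ in nhds x₀, ∀ i : Fin n,
          ((s < x i) ↔ (s < x₀ i)) ∧ ((x i < -s) ↔ (x₀ i < -s)) := by
        rw [Filter.eventually_all]
        intro i
        have h1 : s ≠ x₀ i := by
          intro hcon; exact hs (Set.mem_iUnion.2 ⟨i, by simp [hcon]⟩)
        have h2 : x₀ i ≠ -s := by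
          intro hcon
          refine hs (Set.mem_iUnion.2 ⟨i, ?_⟩)
          right
          rw [hcon]
          simp
        exact (eventually_lt_iff_left h1).and (eventually_lt_iff_right h2)
      filter_upwards [hiff] with x hx
      constructor
      · ext i; rw [mem_lvA, mem_lvA]; exact (hx i).1
      · ext i; rw [mem_lvB, mem_lvB]; exact (hx i).2
    refine (continuousAt_const (y := h (lvA x₀ s, lvB x₀ s))).congr ?_
    filter_upwards [hloc] with x hx
    rw [hx.1, hx.2]

lemma continuous_gInt (G : SimpleGraph (Fin n)) [DecidableRel G.Adj] (r : ℝ) :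
    Continuous (gInt G r) :=
  continuous_levelmap (fun p => if goodPair G r p then charVec p.1 p.2 else 0)

lemma continuous_tInt (G : SimpleGraph (Fin n)) [DecidableRel G.Adj] (r : ℝ) :
    Continuous (tInt G r) :=
  continuous_levelmap (fun p => if goodPair G r p then (1:ℝ) else 0)

lemma goodPair_swap (G : SimpleGraph (Fin n)) [DecidableRel G.Adj] (r : ℝ)
    (p : Finset (Fin n) × Finset (Fin n)) :
    goodPair G r (p.2, p.1) ↔ goodPair G r p := by
  unfold goodPair
  constructor
  · rintro ⟨h1, h2, h3⟩
    refine ⟨h1.symm, by rwa [Finset.union_comm] at h2, ?_⟩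
    rwa [add_comm, Finset.union_comm] at h3
  · rintro ⟨h1, h2, h3⟩
    refine ⟨h1.symm, by rwa [Finset.union_comm], ?_⟩
    rwa [add_comm, Finset.union_comm]

lemma tInt_neg (G : SimpleGraph (Fin n)) [DecidableRel G.Adj] (r : ℝ) (x : Fin n → ℝ) :
    tInt G r (-x) = tInt G r x := by
  rw [tInt, tInt]
  refine setIntegral_congr_fun measurableSet_Ioo fun s _ => ?_
  rw [lvA_neg, lvB_neg]
  by_cases h : goodPair G r (lvA x s, lvB x s)
  · rw [if_pos ((goodPair_swap G r _).2 h), if_pos h]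
  · rw [if_neg (fun hc => h ((goodPair_swap G r _).1 hc)), if_neg h]

lemma gInt_neg (G : SimpleGraph (Fin n)) [DecidableRel G.Adj] (r : ℝ) (x : Fin n → ℝ) :
    gInt G r (-x) = - gInt G r x := by
  rw [gInt, gInt, ← integral_neg]
  refine setIntegral_congr_fun measurableSet_Ioo fun s hs => ?_
  rw [lvA_neg, lvB_neg]
  by_cases h : goodPair G r (lvA x s, lvB x s)
  · rw [if_pos ((goodPair_swap G r _).2 h), if_pos h]
    exact charVec_swap (disjoint_lv x hs.1.le)
  · rw [if_neg (fun hc => h ((goodPair_swap G r _).1 hc)), if_neg h, neg_zero]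

lemma rho_neg (G : SimpleGraph (Fin n)) [DecidableRel G.Adj] (r : ℝ) (x : Fin n → ℝ) :
    rho G r (-x) = - rho G r x := by
  rw [rho, rho, gInt_neg, tInt_neg, smul_neg]

lemma exists_abs_eq_norm (hn : 1 ≤ n) (x : Fin n → ℝ) : ∃ v, |x v| = ‖x‖ := by
  have hne : (Finset.univ : Finset (Fin n)).Nonempty := ⟨⟨0, hn⟩, Finset.mem_univ _⟩
  obtain ⟨v, _, hv⟩ := Finset.exists_mem_eq_sup Finset.univ hne (fun i => ‖x i‖₊)
  refine ⟨v, ?_⟩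
  rw [Pi.norm_def, hv]
  rw [coe_nnnorm, Real.norm_eq_abs]

lemma abs_le_norm (x : Fin n → ℝ) (v : Fin n) : |x v| ≤ ‖x‖ := by
  rw [← Real.norm_eq_abs]
  exact norm_le_pi_norm x v

lemma TVp_smul (G : SimpleGraph (Fin n)) [DecidableRel G.Adj] {c : ℝ} (hc : 0 ≤ c)
    (x : Fin n → ℝ) : TVp G 1 (c • x) = c * TVp G 1 x := by
  rw [TVp, TVp, ← mul_div_assoc]
  congr 1
  rw [Finset.mul_sum]
  refine Finset.sum_congr rfl fun i _ => ?_
  rw [Finset.mul_sum]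
  refine Finset.sum_congr rfl fun j _ => ?_
  by_cases h : G.Adj i j
  · rw [if_pos h, if_pos h, Real.rpow_one, Real.rpow_one, Pi.smul_apply, Pi.smul_apply,
      smul_eq_mul, smul_eq_mul, ← mul_sub, abs_mul, abs_of_nonneg hc]
  · rw [if_neg h, if_neg h, mul_zero]

lemma Np_smul (G : SimpleGraph (Fin n)) [DecidableRel G.Adj] {c : ℝ} (hc : 0 ≤ c)
    (x : Fin n → ℝ) : Np G 1 (c • x) = c * Np G 1 x := by
  rw [Np, Np, Finset.mul_sum]
  refine Finset.sum_congr rfl fun i _ => ?_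
  rw [Real.rpow_one, Real.rpow_one, Pi.smul_apply, smul_eq_mul, abs_mul, abs_of_nonneg hc]
  ring

lemma Np_pos (G : SimpleGraph (Fin n)) [DecidableRel G.Adj] (hdeg : ∀ i, 0 < G.degree i)
    {x : Fin n → ℝ} (hx : x ≠ 0) : 0 < Np G 1 x := by
  obtain ⟨v, hv⟩ := Function.ne_iff.1 hx
  rw [Np]
  refine Finset.sum_pos' (fun i _ => ?_) ⟨v, Finset.mem_univ _, ?_⟩
  · refine mul_nonneg (Nat.cast_nonneg _) ?_
    rw [Real.rpow_one]; exact abs_nonneg _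
  · refine mul_pos ?_ ?_
    · exact_mod_cast hdeg v
    · rw [Real.rpow_one]
      exact abs_pos.2 hv

lemma hasOddMap_n {K : Set (Fin n → ℝ)} (h0 : (0 : Fin n → ℝ) ∉ K) :
    HasOddMapToSphere K n := by
  set ι : (Fin n → ℝ) ≃L[ℝ] EuclideanSpace ℝ (Fin n) :=
    (PiLp.continuousLinearEquiv 2 ℝ (fun _ : Fin n => ℝ)).symm with hι
  have hker : ∀ y : Fin n → ℝ, ι y = 0 → y = 0 := by
    intro y hy
    have := congrArg ι.symm hy
    simpa using this
  refine ⟨fun y => ‖ι y‖⁻¹ • ι y, ?_, ?_, ?_⟩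
  · refine ContinuousOn.fun_smul ?_ (ι.continuous.continuousOn)
    refine ContinuousOn.inv₀ (ι.continuous.norm.continuousOn) ?_
    intro y hy
    simp only [ne_eq, norm_eq_zero]
    intro hcon
    exact h0 ((hker y hcon) ▸ hy)
  · intro y hy
    have hne : ι y ≠ 0 := fun hcon => h0 ((hker y hcon) ▸ hy)
    rw [norm_smul, norm_inv, norm_norm, inv_mul_cancel₀ (norm_ne_zero_iff.2 hne)]
  · intro y _
    show ‖ι (-y)‖⁻¹ • ι (-y) = -(‖ι y‖⁻¹ • ι y)
    rw [map_neg, norm_neg, smul_neg]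

lemma genNeg_mono {S K : Set (Fin n → ℝ)} (hn : 1 ≤ n) (hSne : S.Nonempty)
    (hSsym : SymmSet S) (hKsym : SymmSet K) (h0K : (0:Fin n → ℝ) ∉ K)
    {ψ : (Fin n → ℝ) → (Fin n → ℝ)} (hψc : ContinuousOn ψ S)
    (hψm : ∀ x ∈ S, ψ x ∈ K) (hψo : ∀ x ∈ S, ψ (-x) = -ψ x) :
    genNeg S ≤ genNeg K := by
  have hKne : K.Nonempty := ⟨ψ hSne.some, hψm _ hSne.some_mem⟩
  rw [genNeg, genNeg, if_pos ⟨hSne, hSsym⟩, if_pos ⟨hKne, hKsym⟩]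
  have hKset : {j : ℕ | 1 ≤ j ∧ HasOddMapToSphere K j}.Nonempty := ⟨n, hn, hasOddMap_n h0K⟩
  have hmem := Nat.sInf_mem hKset
  obtain ⟨h1, φ, hφc, hφn, hφo⟩ := hmem
  refine Nat.sInf_le ⟨h1, φ ∘ ψ, ?_, ?_, ?_⟩
  · exact hφc.comp hψc (fun x hx => hψm x hx)
  · intro x hx; exact hφn _ (hψm x hx)
  · intro x hx
    simp only [Function.comp_apply]
    rw [hψo x hx, hφo _ (hψm x hx)]

lemma claim2 (G : SimpleGraph (Fin n)) [DecidableRel G.Adj] (hdeg : ∀ i, 0 < G.degree i)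
    {k : ℕ} (hk1 : 1 ≤ k) (hkn : k ≤ n) {S : Set (Fin n → ℝ)} (hadm : Admissible S)
    (hgen : k ≤ genNeg S) :
    ∃ r' : ℝ, (∃ 𝒜 : Set (Finset (Fin n) × Finset (Fin n)),
      (∀ ab ∈ 𝒜, Disjoint ab.1 ab.2 ∧ (ab.1 ∪ ab.2).Nonempty) ∧
      k ≤ genNeg (geomComplex 𝒜) ∧
      r' = sSup ((fun ab : Finset (Fin n) × Finset (Fin n) =>
        ((eBoundary G ab.1 : ℝ) + (eBoundary G ab.2 : ℝ)) / (volG G (ab.1 ∪ ab.2) : ℝ)) '' 𝒜)) ∧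
      r' ≤ sSup (Fp G 1 '' S) := by
  classical
  obtain ⟨hScomp, h0S, hSsym⟩ := hadm
  obtain ⟨hSne, _⟩ := genNeg_pos_facts hk1 hgen
  have hn1 : 1 ≤ n := le_trans hk1 hkn
  set r := sSup (Fp G 1 '' S) with hrdef
  have hFle : ∀ x ∈ S, Fp G 1 x ≤ r := by
    intro x hx
    refine le_csSup ⟨1, ?_⟩ ⟨x, hx, rfl⟩
    rintro y ⟨z, _, rfl⟩
    exact Fp_le_one G z
  set 𝒜 : Set (Finset (Fin n) × Finset (Fin n)) := {p | goodPair G r p} with h𝒜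
  have hval : ∀ ab ∈ 𝒜, Disjoint ab.1 ab.2 ∧ (ab.1 ∪ ab.2).Nonempty := fun ab h => ⟨h.1, h.2.1⟩
  have hvald : ∀ ab ∈ 𝒜, Disjoint ab.1 ab.2 := fun ab h => h.1
  set ψ : (Fin n → ℝ) → (Fin n → ℝ) := fun x => rho G r (‖x‖⁻¹ • x) with hψ
  have hprops : ∀ x ∈ S, 0 < tInt G r (‖x‖⁻¹ • x) ∧
      rho G r (‖x‖⁻¹ • x) ∈ geomComplex 𝒜 := by
    intro x hx
    have hxne : x ≠ 0 := fun hc => h0S (hc ▸ hx)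
    have hnx : ‖(‖x‖⁻¹ • x)‖ = 1 := norm_smul_inv_norm hxne
    have hb : ∀ v, |(‖x‖⁻¹ • x) v| ≤ 1 := fun v => by
      rw [← hnx]; exact abs_le_norm _ v
    have hu : ∃ v, |(‖x‖⁻¹ • x) v| = 1 := by
      obtain ⟨v, hv⟩ := exists_abs_eq_norm hn1 (‖x‖⁻¹ • x)
      exact ⟨v, by rw [hv, hnx]⟩
    have hNpos : 0 < Np G 1 x := Np_pos G hdeg hxne
    have hTVle : TVp G 1 x ≤ r * Np G 1 x := by
      have h := hFle x hx
      rw [Fp, div_le_iff₀ hNpos] at h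
      linarith
    have hF : TVp G 1 (‖x‖⁻¹ • x) ≤ r * Np G 1 (‖x‖⁻¹ • x) := by
      have hc : (0:ℝ) ≤ ‖x‖⁻¹ := by positivity
      rw [TVp_smul G hc, Np_smul G hc]
      calc ‖x‖⁻¹ * TVp G 1 x ≤ ‖x‖⁻¹ * (r * Np G 1 x) :=
            mul_le_mul_of_nonneg_left hTVle hc
        _ = r * (‖x‖⁻¹ * Np G 1 x) := by ring
    exact rho_props G hdeg hb hu hF
  have hψm : ∀ x ∈ S, ψ x ∈ geomComplex 𝒜 := fun x hx => (hprops x hx).2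
  have hψc : ContinuousOn ψ S := by
    intro x hx
    have hxne : x ≠ 0 := fun hc => h0S (hc ▸ hx)
    have hnc : ContinuousWithinAt (fun y : Fin n → ℝ => ‖y‖⁻¹ • y) S x := by
      refine ContinuousWithinAt.fun_smul ?_ continuousWithinAt_id
      exact ContinuousWithinAt.inv₀ (continuous_norm.continuousWithinAt)
        (norm_ne_zero_iff.2 hxne)
    have hrc : ContinuousAt (rho G r) (‖x‖⁻¹ • x) := by
      have ht := (hprops x hx).1
      exact ContinuousAt.smul (((continuous_tInt G r).continuousAt).inv₀ (ne_of_gt ht))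
        (continuous_gInt G r).continuousAt
    exact ContinuousAt.comp_continuousWithinAt (g := rho G r)
      (f := fun y : Fin n → ℝ => ‖y‖⁻¹ • y) hrc hnc
  have hψo : ∀ x ∈ S, ψ (-x) = -ψ x := by
    intro x _
    simp only [hψ]
    rw [norm_neg, smul_neg, rho_neg]
  have hKsym : SymmSet (geomComplex 𝒜) := by
    refine geomComplex_symm hvald ?_
    intro ab hab
    exact (goodPair_swap G r ab).2 hab
  have h0K : (0 : Fin n → ℝ) ∉ geomComplex 𝒜 := geom_zero_not_mem hval
  have hgenK : k ≤ genNeg (geomComplex 𝒜) :=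
    le_trans hgen (genNeg_mono hn1 hSne hSsym hKsym h0K hψc hψm hψo)
  have h𝒜ne : 𝒜.Nonempty := by
    obtain ⟨x, hx⟩ := hSne
    have hmem := (hprops x hx).2
    rw [mem_geomComplex] at hmem
    obtain ⟨C, hC𝒜, _, hhull⟩ := hmem
    have hCne : C.Nonempty := by
      by_contra hc
      rw [Set.not_nonempty_iff_eq_empty] at hc
      rw [hc] at hhull
      simp [convexHull_empty] at hhull
    obtain ⟨p, hp⟩ := hCne
    exact ⟨p, hC𝒜 hp⟩
  refine ⟨_, ⟨𝒜, hval, hgenK, rfl⟩, ?_⟩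
  refine csSup_le (h𝒜ne.image _) ?_
  rintro y ⟨p, hp, rfl⟩
  exact hp.2.2

end Aux

/-- **`λ_k⁻(Δ_1) = ĥ_k⁻`.** -/
theorem stmt5 {n : ℕ} (G : SimpleGraph (Fin n)) [DecidableRel G.Adj]
    (hdeg : ∀ i, 0 < G.degree i) (k : ℕ) (hk1 : 1 ≤ k) (hkn : k ≤ n) :
    lamNeg G 1 k = hHatNeg G k := by
  classical
  rw [lamNeg, hHatNeg]
  set ΛS : Set ℝ := {r : ℝ | ∃ S : Set (Fin n → ℝ), Admissible S ∧ k ≤ genNeg S ∧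
    r = sSup (Fp G 1 '' S)} with hΛS
  set HS : Set ℝ := {r : ℝ | ∃ 𝒜 : Set (Finset (Fin n) × Finset (Fin n)),
    (∀ ab ∈ 𝒜, Disjoint ab.1 ab.2 ∧ (ab.1 ∪ ab.2).Nonempty) ∧
    k ≤ genNeg (geomComplex 𝒜) ∧
    r = sSup ((fun ab : Finset (Fin n) × Finset (Fin n) =>
      ((eBoundary G ab.1 : ℝ) + (eBoundary G ab.2 : ℝ)) / (volG G (ab.1 ∪ ab.2) : ℝ)) '' 𝒜)}
    with hHS
  have h1 : ∀ rr ∈ HS, ∃ r' ∈ ΛS, r' ≤ rr := by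
    rintro rr ⟨𝒜, hval, hgen, rfl⟩
    obtain ⟨r', hmem, hle⟩ := claim1 G hdeg hk1 hval hgen
    exact ⟨r', hmem, hle⟩
  have h2 : ∀ rr ∈ ΛS, ∃ r' ∈ HS, r' ≤ rr := by
    rintro rr ⟨S, hadm, hgen, rfl⟩
    obtain ⟨r', hmem, hle⟩ := claim2 G hdeg hk1 hkn hadm hgen
    exact ⟨r', hmem, hle⟩
  have hΛ0 : ∀ rr ∈ ΛS, (0:ℝ) ≤ rr := by
    rintro rr ⟨S, hadm, hgen, rfl⟩
    obtain ⟨hSne, _⟩ := genNeg_pos_facts hk1 hgen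
    obtain ⟨x, hx⟩ := hSne
    calc (0:ℝ) ≤ Fp G 1 x := Fp_nonneg G x
      _ ≤ sSup (Fp G 1 '' S) := le_csSup
          ⟨1, by rintro y ⟨z, _, rfl⟩; exact Fp_le_one G z⟩ ⟨x, hx, rfl⟩
  have hH0 : ∀ rr ∈ HS, (0:ℝ) ≤ rr := by
    rintro rr ⟨𝒜, hval, hgen, rfl⟩
    obtain ⟨hKne, _⟩ := genNeg_pos_facts hk1 hgen
    obtain ⟨x, hx⟩ := hKne
    rw [mem_geomComplex] at hx
    obtain ⟨C, hC𝒜, _, hhull⟩ := hx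
    have hCne : C.Nonempty := by
      by_contra hc
      rw [Set.not_nonempty_iff_eq_empty] at hc
      rw [hc] at hhull
      simp [convexHull_empty] at hhull
    obtain ⟨p, hp⟩ := hCne
    have hmem : ((eBoundary G p.1 : ℝ) + (eBoundary G p.2 : ℝ)) / (volG G (p.1 ∪ p.2) : ℝ)
        ∈ ((fun ab : Finset (Fin n) × Finset (Fin n) =>
          ((eBoundary G ab.1 : ℝ) + (eBoundary G ab.2 : ℝ)) / (volG G (ab.1 ∪ ab.2) : ℝ)) '' 𝒜) :=
      ⟨p, hC𝒜 hp, rfl⟩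
    refine le_trans ?_ (le_csSup (Set.Finite.bddAbove (Set.toFinite _)) hmem)
    positivity
  rcases ΛS.eq_empty_or_nonempty with hΛ | hΛ
  · have hH : HS = ∅ := by
      rw [Set.eq_empty_iff_forall_notMem]
      intro rr hrr
      obtain ⟨r', hr', _⟩ := h1 rr hrr
      exact Set.eq_empty_iff_forall_notMem.1 hΛ r' hr'
    rw [hΛ, hH]
  · have hHne : HS.Nonempty := by
      obtain ⟨rr, hrr⟩ := hΛ
      obtain ⟨r', hr', _⟩ := h2 rr hrr
      exact ⟨r', hr'⟩
    refine le_antisymm ?_ ?_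
    · refine le_csInf hHne ?_
      intro rr hrr
      obtain ⟨r', hr', hle⟩ := h1 rr hrr
      exact le_trans (csInf_le ⟨0, fun y hy => hΛ0 y hy⟩ hr') hle
    · refine le_csInf hΛ ?_
      intro rr hrr
      obtain ⟨r', hr', hle⟩ := h2 rr hrr
      exact le_trans (csInf_le ⟨0, fun y hy => hH0 y hy⟩ hr') hle
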